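/- arXiv:1212.0448 — 12 statements merged into one kernel-verified Lean document; each statement's English description precedes it below -/
import Mathlib

section
/- Let g : ℝ → ℝ be twice differentiable and let y be three times differentiable on an open interval I ⊆ ℝ with y'(x) ≠ 0 and (y'(x))² = g(y(x)) for all x ∈ I. Then for every x ∈ I one has y''(x) = (1/2)·g'(y(x)) and (y''(x)/(2y'(x)))² − (d/dx)(y''(x)/(2y'(x))) = (3/(16·g(y(x))))·(g'(y(x)))² − (1/4)·g''(y(x)). -/
/-- If `g` is twice differentiable, `y` is three times differentiable on an
open interval `I` with `y' ≠ 0` and `(y')² = g ∘ y` on `I`, then `y'' = (1/2)·g'(y)` and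
`(y''/(2y'))² − (d/dx)(y''/(2y')) = (3/(16 g(y)))·(g'(y))² − (1/4)·g''(y)` on `I`. -/
theorem stmt_0 (g y : ℝ → ℝ) (I : Set ℝ) (hI : IsOpen I)
    (hg : Differentiable ℝ g) (hg' : Differentiable ℝ (deriv g))
    (hy : ∀ x ∈ I, DifferentiableAt ℝ y x)
    (hy' : ∀ x ∈ I, DifferentiableAt ℝ (deriv y) x)
    (hy'' : ∀ x ∈ I, DifferentiableAt ℝ (deriv (deriv y)) x)
    (hy0 : ∀ x ∈ I, deriv y x ≠ 0)
    (heq : ∀ x ∈ I, (deriv y x) ^ 2 = g (y x)) :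
    ∀ x ∈ I,
      deriv (deriv y) x = (1 / 2) * deriv g (y x) ∧
      (deriv (deriv y) x / (2 * deriv y x)) ^ 2
          - deriv (fun t => deriv (deriv y) t / (2 * deriv y t)) x
        = (3 / (16 * g (y x))) * (deriv g (y x)) ^ 2
            - (1 / 4) * deriv (deriv g) (y x) := by
  have key : ∀ x ∈ I, deriv (deriv y) x = (1 / 2) * deriv g (y x) := by
    intro x hx
    have hev : (fun t => (deriv y t) ^ 2) =ᶠ[nhds x] (fun t => g (y t)) := by
      filter_upwards [hI.mem_nhds hx] with t ht using heq t ht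
    have hd1 : deriv (fun t => (deriv y t) ^ 2) x
        = 2 * deriv y x * deriv (deriv y) x := by
      rw [deriv_fun_pow (hy' x hx) 2]; push_cast; ring
    have hd2 : deriv (fun t => g (y t)) x = deriv g (y x) * deriv y x := by
      rw [show (fun t => g (y t)) = g ∘ y from rfl,
        deriv_comp x (hg (y x)) (hy x hx)]
    have h := hev.deriv_eq
    rw [hd1, hd2] at h
    have hp := hy0 x hx
    have h2 := mul_right_cancel₀ hp
      (show (deriv (deriv y) x * 2) * deriv y x = deriv g (y x) * deriv y x by linarith)
    linarith
  intro x hx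
  refine ⟨key x hx, ?_⟩
  have hydiff : DifferentiableAt ℝ (fun t => deriv g (y t)) x := (hg' (y x)).comp x (hy x hx)
  have h3 : deriv (deriv (deriv y)) x
      = (1 / 2) * (deriv (deriv g) (y x) * deriv y x) := by
    have hev : deriv (deriv y) =ᶠ[nhds x] (fun t => (1 / 2) * deriv g (y t)) := by
      filter_upwards [hI.mem_nhds hx] with t ht using key t ht
    rw [hev.deriv_eq, deriv_const_mul _ hydiff]
    congr 1
    exact deriv_comp x (hg' (y x)) (hy x hx)
  have hp := hy0 x hx
  have hden : (2 : ℝ) * deriv y x ≠ 0 := mul_ne_zero two_ne_zero hp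
  have hdiv : deriv (fun t => deriv (deriv y) t / (2 * deriv y t)) x
      = (deriv (deriv (deriv y)) x * (2 * deriv y x)
          - deriv (deriv y) x * (2 * deriv (deriv y) x)) / (2 * deriv y x) ^ 2 := by
    rw [deriv_fun_div (hy'' x hx) ((hy' x hx).const_mul 2) hden,
      deriv_const_mul _ (hy' x hx)]
  rw [hdiv, h3, key x hx, ← heq x hx]
  field_simp
  ring
end

section
/- Let I₁ : ℝ → ℝ be twice differentiable, I₀ : ℝ → ℝ be any function, and let y be three times differentiable on an open interval I ⊆ ℝ with y'(x) ≠ 0 and (y'(x))² = 1/I₁(y(x)) for all x ∈ I. Then for every real number k and every x ∈ I, (y'(x))²·(I₁(y(x))·k² + I₀(y(x))) + (1/2)·{y,x}(x) = k² − V(x), where V(x) = −I₀(y(x))/I₁(y(x)) + (4·I₁(y(x))·I₁''(y(x)) − 5·(I₁'(y(x)))²)/(16·I₁(y(x))³). -/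
/-- Milson's formula: if `(y')² = 1/I₁(y)` on an open interval `I`, then
`(y')²·(I₁(y)k² + I₀(y)) + (1/2)·{y,x} = k² − V(x)` with
`V = −I₀(y)/I₁(y) + (4 I₁(y) I₁''(y) − 5 (I₁'(y))²)/(16 I₁(y)³)`. -/
theorem stmt_1 (I₁ I₀ y : ℝ → ℝ) (I : Set ℝ) (hI : IsOpen I)
    (hI₁ : Differentiable ℝ I₁) (hI₁' : Differentiable ℝ (deriv I₁))
    (hy : ∀ x ∈ I, DifferentiableAt ℝ y x)
    (hy' : ∀ x ∈ I, DifferentiableAt ℝ (deriv y) x)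
    (hy'' : ∀ x ∈ I, DifferentiableAt ℝ (deriv (deriv y)) x)
    (hy0 : ∀ x ∈ I, deriv y x ≠ 0)
    (heq : ∀ x ∈ I, (deriv y x) ^ 2 = 1 / I₁ (y x)) :
    ∀ (k : ℝ), ∀ x ∈ I,
      (deriv y x) ^ 2 * (I₁ (y x) * k ^ 2 + I₀ (y x))
          + (1 / 2) * (deriv (fun t => deriv (deriv y) t / deriv y t) x
              - (1 / 2) * (deriv (deriv y) x / deriv y x) ^ 2)
        = k ^ 2 - (-(I₀ (y x) / I₁ (y x))
            + (4 * I₁ (y x) * deriv (deriv I₁) (y x) - 5 * (deriv I₁ (y x)) ^ 2)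
              / (16 * (I₁ (y x)) ^ 3)) := by
  -- I₁(y z) ≠ 0 on I
  have hA : ∀ z ∈ I, I₁ (y z) ≠ 0 := by
    intro z hz h0
    have h := heq z hz
    rw [h0, div_zero] at h
    exact hy0 z hz (pow_eq_zero_iff (n := 2) (by norm_num) |>.mp h)
  -- second derivative formula on I
  have hq : ∀ z ∈ I, deriv (deriv y) z
      = -(deriv I₁ (y z)) / (2 * (I₁ (y z)) ^ 2) := by
    intro z hz
    have hp := hy0 z hz
    have ha := hA z hz
    have hC : HasDerivAt (fun t => I₁ (y t)) (deriv I₁ (y z) * deriv y z) z :=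
      (hI₁ (y z)).hasDerivAt.comp z (hy z hz).hasDerivAt
    have hF : HasDerivAt (fun t => (deriv y t) ^ 2)
        ((2 : ℕ) * deriv y z ^ 1 * deriv (deriv y) z) z :=
      (hy' z hz).hasDerivAt.pow 2
    have hG : HasDerivAt (fun t => 1 / I₁ (y t))
        (-(deriv I₁ (y z) * deriv y z) / (I₁ (y z)) ^ 2) z := by
      simp only [one_div]; exact hC.inv ha
    have hev : (fun t => (deriv y t) ^ 2) =ᶠ[nhds z] (fun t => 1 / I₁ (y t)) :=
      Filter.eventuallyEq_of_mem (hI.mem_nhds hz) heq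
    have hder : (2 : ℕ) * deriv y z ^ 1 * deriv (deriv y) z
        = -(deriv I₁ (y z) * deriv y z) / (I₁ (y z)) ^ 2 := by
      rw [← hF.deriv, ← hG.deriv]
      exact hev.deriv_eq
    field_simp at hder ⊢
    have := mul_left_cancel₀ hp (by rw [← hder]; push_cast; ring : deriv y z * (deriv (deriv y) z * (2 * I₁ (y z) ^ 2)) = deriv y z * (-(deriv I₁ (y z))))
    linarith
  intro k x hx
  have hp := hy0 x hx
  have ha := hA x hx
  -- third derivative at x
  have hC : HasDerivAt (fun t => I₁ (y t)) (deriv I₁ (y x) * deriv y x) x :=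
    (hI₁ (y x)).hasDerivAt.comp x (hy x hx).hasDerivAt
  have hN : HasDerivAt (fun t => deriv I₁ (y t)) (deriv (deriv I₁) (y x) * deriv y x) x :=
    (hI₁' (y x)).hasDerivAt.comp x (hy x hx).hasDerivAt
  have hD : HasDerivAt (fun t => 2 * (I₁ (y t)) ^ 2)
      (2 * ((2 : ℕ) * I₁ (y x) ^ 1 * (deriv I₁ (y x) * deriv y x))) x :=
    (hC.pow 2).const_mul 2
  have hDa : (2 : ℝ) * (I₁ (y x)) ^ 2 ≠ 0 := by positivity
  have hh : HasDerivAt (fun t => -(deriv I₁ (y t)) / (2 * (I₁ (y t)) ^ 2))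
      ((-(deriv (deriv I₁) (y x) * deriv y x) * (2 * (I₁ (y x)) ^ 2)
        - (-(deriv I₁ (y x))) * (2 * ((2 : ℕ) * I₁ (y x) ^ 1 * (deriv I₁ (y x) * deriv y x))))
        / (2 * (I₁ (y x)) ^ 2) ^ 2) x :=
    (hN.neg).div hD hDa
  have hev2 : deriv (deriv y) =ᶠ[nhds x]
      (fun t => -(deriv I₁ (y t)) / (2 * (I₁ (y t)) ^ 2)) :=
    Filter.eventuallyEq_of_mem (hI.mem_nhds hx) hq
  have hr : deriv (deriv (deriv y)) x
      = (-(deriv (deriv I₁) (y x) * deriv y x) * (2 * (I₁ (y x)) ^ 2)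
        - (-(deriv I₁ (y x))) * (2 * ((2 : ℕ) * I₁ (y x) ^ 1 * (deriv I₁ (y x) * deriv y x))))
        / (2 * (I₁ (y x)) ^ 2) ^ 2 := by
    rw [hev2.deriv_eq]; exact hh.deriv
  -- derivative of quotient
  have hdiv : HasDerivAt (fun t => deriv (deriv y) t / deriv y t)
      ((deriv (deriv (deriv y)) x * deriv y x
        - deriv (deriv y) x * deriv (deriv y) x) / (deriv y x) ^ 2) x :=
    (hy'' x hx).hasDerivAt.div (hy' x hx).hasDerivAt hp
  have hps : deriv y x ^ 2 = 1 / I₁ (y x) := heq x hx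
  have hrp : deriv (deriv (deriv y)) x * deriv y x
      = (4 * I₁ (y x) * (deriv I₁ (y x)) ^ 2
          - 2 * (I₁ (y x)) ^ 2 * deriv (deriv I₁) (y x)) / (4 * (I₁ (y x)) ^ 5) := by
    calc deriv (deriv (deriv y)) x * deriv y x
        = ((-(deriv (deriv I₁) (y x) * deriv y x) * (2 * (I₁ (y x)) ^ 2)
        - (-(deriv I₁ (y x))) * (2 * ((2 : ℕ) * I₁ (y x) ^ 1 * (deriv I₁ (y x) * deriv y x))))
        / (2 * (I₁ (y x)) ^ 2) ^ 2) * deriv y x := by rw [hr]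
      _ = deriv y x ^ 2 * ((4 * I₁ (y x) * (deriv I₁ (y x)) ^ 2
          - 2 * (I₁ (y x)) ^ 2 * deriv (deriv I₁) (y x)) / (4 * (I₁ (y x)) ^ 4)) := by
          push_cast
          rw [div_mul_eq_mul_div, mul_div_assoc',
            div_eq_div_iff (pow_ne_zero 2 hDa) (mul_ne_zero (by norm_num) (pow_ne_zero 4 ha))]
          ring
      _ = (1 / I₁ (y x)) * ((4 * I₁ (y x) * (deriv I₁ (y x)) ^ 2
          - 2 * (I₁ (y x)) ^ 2 * deriv (deriv I₁) (y x)) / (4 * (I₁ (y x)) ^ 4)) := by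
          rw [hps]
      _ = _ := by
          rw [one_div, inv_mul_eq_div, div_div]
          ring_nf
  have hS : deriv (fun t => deriv (deriv y) t / deriv y t) x
      = (3 * (deriv I₁ (y x)) ^ 2 - 2 * I₁ (y x) * deriv (deriv I₁) (y x))
        / (4 * (I₁ (y x)) ^ 3) := by
    rw [hdiv.deriv, hps, hrp, hq x hx]
    field_simp
    ring
  rw [hS, div_pow, hps, hq x hx]
  field_simp
  ring
end

section
/- Let ρ, σ, ρ₁, σ₁ ∈ ℝ and κ ∈ ℝ \ {0}, and set R(t) = t² + ρt + σ. Let y be three times differentiable on an open interval I ⊆ ℝ with y'(x) ≠ 0, y(x) ∉ {0,1}, R(y(x)) ≠ 0, and (y'(x))²·R(y(x)) = 4κ·y(x)²·(1−y(x))² for all x ∈ I. Then for every x ∈ I (writing y = y(x)): (y''/(2y'))² − (d/dx)(y''/(2y')) − κ·(y² + (ρ+ρ₁)y + σ+σ₁)/R(y) = (κ·y²(1−y)²/R(y))·[ 1/(y²(1−y)²) + 2/R(y) + (1−2y)(2y+ρ)/(y(1−y)R(y)) − 5(2y+ρ)²/(4R(y)²) ] − κ·(y² + (ρ+ρ₁)y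 + σ+σ₁)/R(y). -/
/-- The quadratic `R(t) = t² + ρt + σ` of Iwata's first case. -/
def iwataR (ρ σ : ℝ) : ℝ → ℝ := fun t => t ^ 2 + ρ * t + σ

private lemma iwata_key (f p q r ρ κ R : ℝ) (hp : p ≠ 0) (hf : f ≠ 0) (hf1 : (1:ℝ) - f ≠ 0)
    (hR0 : R ≠ 0)
    (h1 : p^2*R = 4*κ*f^2*(1-f)^2)
    (h2 : 2*q*R + p^2*(2*f+ρ) = 4*κ*(2*f*(1-f)^2 - 2*f^2*(1-f)))
    (h3 : 2*q^2*R + 2*p*r*R + 5*p^2*q*(2*f+ρ) + 2*p^4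
        = 4*κ*(q*(2*f*(1-f)^2-2*f^2*(1-f)) + 2*p^2*(6*f^2-6*f+1))) :
    (q/(2*p))^2 - (r*(2*p) - q*(2*q))/(2*p)^2
      = (κ*f^2*(1-f)^2/R) * (1/(f^2*(1-f)^2) + 2/R
          + (1-2*f)*(2*f+ρ)/(f*(1-f)*R) - 5*(2*f+ρ)^2/(4*R^2)) := by
  have hG : (3*q^2 - 2*p*r)*R^3 - 4*κ*p^2*R^2 - 8*κ*p^2*(f^2*(1-f)^2)*R
      - 2*κ*p^2*(2*f*(1-f)^2-2*f^2*(1-f))*(2*f+ρ)*R + 5*κ*p^2*(f^2*(1-f)^2)*(2*f+ρ)^2 = 0 := by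
    linear_combination (-(R^2)) * h3
      + ((5/2)*q*R^2 + 3*κ*(2*f*(1-f)^2-2*f^2*(1-f))*R + (5/4)*p^2*(2*f+ρ)*R) * h2
      + (-(5/4)*p^2*(2*f+ρ)^2 + 2*p^2*R - 4*κ*(2*(6*f^2-6*f+1))*R - 4*κ*R) * h1
  have e1 : (q/(2*p))^2 - (r*(2*p) - q*(2*q))/(2*p)^2 = (3*q^2 - 2*p*r)/(4*p^2) := by
    field_simp
    ring
  have e2 : (κ*f^2*(1-f)^2/R) * (1/(f^2*(1-f)^2) + 2/R
          + (1-2*f)*(2*f+ρ)/(f*(1-f)*R) - 5*(2*f+ρ)^2/(4*R^2))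
      = κ*(4*R^2 + 8*f^2*(1-f)^2*R + 4*f*(1-f)*(1-2*f)*(2*f+ρ)*R - 5*f^2*(1-f)^2*(2*f+ρ)^2)/(4*R^3) := by
    field_simp
    ring
  rw [e1, e2, div_eq_div_iff (by positivity) (by positivity)]
  linear_combination 4 * hG

/-- closed form of Iwata's first potential `V_I`. -/
theorem stmt_2 (ρ σ ρ₁ σ₁ κ : ℝ) (hκ : κ ≠ 0) (y : ℝ → ℝ) (I : Set ℝ) (hI : IsOpen I)
    (hy : ∀ x ∈ I, DifferentiableAt ℝ y x)
    (hy' : ∀ x ∈ I, DifferentiableAt ℝ (deriv y) x)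
    (hy'' : ∀ x ∈ I, DifferentiableAt ℝ (deriv (deriv y)) x)
    (hy0 : ∀ x ∈ I, deriv y x ≠ 0)
    (hy01 : ∀ x ∈ I, y x ≠ 0 ∧ y x ≠ 1)
    (hR : ∀ x ∈ I, iwataR ρ σ (y x) ≠ 0)
    (heq : ∀ x ∈ I, (deriv y x) ^ 2 * iwataR ρ σ (y x)
      = 4 * κ * (y x) ^ 2 * (1 - y x) ^ 2) :
    ∀ x ∈ I,
      (deriv (deriv y) x / (2 * deriv y x)) ^ 2
          - deriv (fun t => deriv (deriv y) t / (2 * deriv y t)) x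
          - κ * ((y x) ^ 2 + (ρ + ρ₁) * y x + σ + σ₁) / iwataR ρ σ (y x)
        = (κ * (y x) ^ 2 * (1 - y x) ^ 2 / iwataR ρ σ (y x)) *
            (1 / ((y x) ^ 2 * (1 - y x) ^ 2) + 2 / iwataR ρ σ (y x)
              + (1 - 2 * y x) * (2 * y x + ρ) / (y x * (1 - y x) * iwataR ρ σ (y x))
              - 5 * (2 * y x + ρ) ^ 2 / (4 * (iwataR ρ σ (y x)) ^ 2))
          - κ * ((y x) ^ 2 + (ρ + ρ₁) * y x + σ + σ₁) / iwataR ρ σ (y x) := by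
  -- Step 1: the first derivative of the autonomous equation holds on all of I.
  have hA : ∀ t ∈ I,
      2*(deriv y t)*(deriv (deriv y) t)*((y t)^2 + ρ*(y t) + σ)
        + (deriv y t)^3*(2*(y t)+ρ)
        - 4*κ*((2*(y t)*(1-y t)^2 - 2*(y t)^2*(1-y t))*(deriv y t)) = 0 := by
    intro t ht
    have hYt : HasDerivAt y (deriv y t) t := (hy t ht).hasDerivAt
    have hPt : HasDerivAt (deriv y) (deriv (deriv y) t) t := (hy' t ht).hasDerivAt
    have hFt := (hPt.pow 2).mul (((hYt.pow 2).add (hYt.const_mul ρ)).add_const σ)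
    have hGt := ((hYt.pow 2).mul (((hasDerivAt_const t (1:ℝ)).sub hYt).pow 2)).const_mul (4*κ)
    have hHz : (fun s => (deriv y s)^2 * ((y s)^2 + ρ*(y s) + σ)
        - 4*κ*((y s)^2 * (1-y s)^2)) =ᶠ[nhds t] (fun _ => (0:ℝ)) := by
      filter_upwards [hI.mem_nhds ht] with s hs
      have h := heq s hs
      simp only [iwataR] at h
      linear_combination h
    have hH0 : HasDerivAt (fun s => (deriv y s)^2 * ((y s)^2 + ρ*(y s) + σ)
        - 4*κ*((y s)^2 * (1-y s)^2)) (0:ℝ) t :=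
      (hasDerivAt_const t (0:ℝ)).congr_of_eventuallyEq hHz
    have hu := hH0.unique (hFt.sub hGt)
    simp only [Pi.pow_apply, Pi.add_apply, Pi.sub_apply, Pi.mul_apply] at hu
    linear_combination -hu
  intro x hx
  obtain ⟨hf0, hf1'⟩ := hy01 x hx
  have hf1 : (1:ℝ) - y x ≠ 0 := sub_ne_zero.mpr (Ne.symm hf1')
  have hp : deriv y x ≠ 0 := hy0 x hx
  have hR0 : (y x)^2 + ρ*(y x) + σ ≠ 0 := by
    have := hR x hx; simpa [iwataR] using this
  have hY : HasDerivAt y (deriv y x) x := (hy x hx).hasDerivAt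
  have hP : HasDerivAt (deriv y) (deriv (deriv y) x) x := (hy' x hx).hasDerivAt
  have hQ : HasDerivAt (deriv (deriv y)) (deriv (deriv (deriv y)) x) x := (hy'' x hx).hasDerivAt
  set f := y x with hfdef
  set p := deriv y x with hpdef
  set q := deriv (deriv y) x with hqdef
  set r := deriv (deriv (deriv y)) x with hrdef
  -- Step 2: h1, the autonomous equation at x.
  have h1 : p^2*((y x)^2 + ρ*(y x) + σ) = 4*κ*(y x)^2*(1-y x)^2 := by
    have h := heq x hx
    simp only [iwataR] at h
    linear_combination h
  -- Step 3: h2, from hA at x, dividing by p.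
  have h2 : 2*q*((y x)^2 + ρ*(y x) + σ) + p^2*(2*(y x)+ρ)
      = 4*κ*(2*(y x)*(1-y x)^2 - 2*(y x)^2*(1-y x)) := by
    have h := hA x hx
    apply mul_left_cancel₀ hp
    linear_combination h
  -- Step 4: h3, differentiating hA at x.
  have hAd : HasDerivAt (fun s =>
      2*(deriv y s)*(deriv (deriv y) s)*((y s)^2 + ρ*(y s) + σ)
        + (deriv y s)^3*(2*(y s)+ρ)
        - 4*κ*((2*(y s)*(1-y s)^2 - 2*(y s)^2*(1-y s))*(deriv y s)))
      (2*q^2*((y x)^2 + ρ*(y x) + σ) + 2*p*r*((y x)^2 + ρ*(y x) + σ)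
        + 5*p^2*q*(2*(y x)+ρ) + 2*p^4
        - 4*κ*(q*(2*(y x)*(1-y x)^2 - 2*(y x)^2*(1-y x)) + 2*p^2*(6*(y x)^2-6*(y x)+1))) x := by
    have t1 := ((hP.const_mul 2).mul hQ).mul (((hY.pow 2).add (hY.const_mul ρ)).add_const σ)
    have t2 := (hP.pow 3).mul ((hY.const_mul 2).add_const ρ)
    have t3 := ((((hY.const_mul 2).mul (((hasDerivAt_const x (1:ℝ)).sub hY).pow 2)).sub
        (((hY.pow 2).const_mul 2).mul ((hasDerivAt_const x (1:ℝ)).sub hY))).mul hP).const_mul (4*κ)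
    have := (t1.add t2).sub t3
    simp only [Pi.pow_apply, Pi.add_apply, Pi.sub_apply, Pi.mul_apply] at this
    refine HasDerivAt.congr_deriv this ?_
    ring
  have hAz : (fun s =>
      2*(deriv y s)*(deriv (deriv y) s)*((y s)^2 + ρ*(y s) + σ)
        + (deriv y s)^3*(2*(y s)+ρ)
        - 4*κ*((2*(y s)*(1-y s)^2 - 2*(y s)^2*(1-y s))*(deriv y s)))
      =ᶠ[nhds x] (fun _ => (0:ℝ)) := by
    filter_upwards [hI.mem_nhds hx] with s hs using hA s hs
  have h3z := (((hasDerivAt_const x (0:ℝ)).congr_of_eventuallyEq hAz).unique hAd)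
  have h3 : 2*q^2*((y x)^2 + ρ*(y x) + σ) + 2*p*r*((y x)^2 + ρ*(y x) + σ)
      + 5*p^2*q*(2*(y x)+ρ) + 2*p^4
      = 4*κ*(q*(2*(y x)*(1-y x)^2 - 2*(y x)^2*(1-y x)) + 2*p^2*(6*(y x)^2-6*(y x)+1)) := by
    linear_combination -h3z
  -- Step 5: compute the derivative of q/(2p).
  have hdiv : HasDerivAt (fun t => deriv (deriv y) t / (2 * deriv y t))
      ((r * (2*p) - q * (2*q)) / (2*p)^2) x := by
    exact hQ.div (hP.const_mul 2) (by simpa using hp)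
  rw [hdiv.deriv]
  simp only [iwataR]
  rw [sub_left_inj]
  exact iwata_key (y x) p q r ρ κ ((y x)^2 + ρ*(y x) + σ) hp hf0 hf1 hR0 h1 h2 h3
end

section
/- Let α > 0 and V₀ ∈ ℝ, and define y(x) = cosh²(αx). Then for every x ≠ 0: (i) (y'(x))²·(y(x)² − y(x)) = 4α²·y(x)²·(1−y(x))²; and (ii) with R(t) = t² − t, κ = α², ρ = −1, σ = 0, ρ₁ = −V₀/α², σ₁ = V₀/α² + 3/4, one has (κ·y²(1−y)²/R(y))·[ 1/(y²(1−y)²) + 2/R(y) + (1−2y)(2y+ρ)/(y(1−y)R(y)) − 5(2y+ρ)²/(4R(y)²) ] − κ·(y² + (ρ+ρ₁)y + σ+σ₁)/R(y) = V₀/cosh²(αx), where y = y(x). -/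
/-- the modified Pöschl–Teller barrier `V₀/cosh²(αx)` belongs to Iwata's class,
via the coordinate transformation `y(x) = cosh²(αx)` with `R(t) = t² − t`, `κ = α²`,
`ρ = −1`, `σ = 0`, `ρ₁ = −V₀/α²`, `σ₁ = V₀/α² + 3/4`. -/
theorem stmt_3 (α V₀ : ℝ) (hα : 0 < α) (y : ℝ → ℝ)
    (hy : ∀ x : ℝ, y x = Real.cosh (α * x) ^ 2) :
    ∀ x : ℝ, x ≠ 0 →
      (deriv y x) ^ 2 * ((y x) ^ 2 - y x)
          = 4 * α ^ 2 * (y x) ^ 2 * (1 - y x) ^ 2 ∧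
      (α ^ 2 * (y x) ^ 2 * (1 - y x) ^ 2 / ((y x) ^ 2 - y x)) *
            (1 / ((y x) ^ 2 * (1 - y x) ^ 2) + 2 / ((y x) ^ 2 - y x)
              + (1 - 2 * y x) * (2 * y x + (-1)) / (y x * (1 - y x) * ((y x) ^ 2 - y x))
              - 5 * (2 * y x + (-1)) ^ 2 / (4 * ((y x) ^ 2 - y x) ^ 2))
          - α ^ 2 * ((y x) ^ 2 + ((-1) + (-(V₀ / α ^ 2))) * y x + 0 + (V₀ / α ^ 2 + 3 / 4))
              / ((y x) ^ 2 - y x)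
        = V₀ / Real.cosh (α * x) ^ 2 := by
  intro x hx
  have hyf : y = fun x => Real.cosh (α * x) ^ 2 := funext hy
  set c := Real.cosh (α * x) with hc
  set s := Real.sinh (α * x) with hs
  have hαx : α * x ≠ 0 := mul_ne_zero (ne_of_gt hα) hx
  have hsne : s ≠ 0 := by
    simp [hs, Real.sinh_eq_zero, hαx]
  have hcpos : 0 < c := Real.cosh_pos _
  have hcne : c ≠ 0 := ne_of_gt hcpos
  have hid : c ^ 2 - s ^ 2 = 1 := Real.cosh_sq_sub_sinh_sq (α * x)
  have hderiv : deriv y x = 2 * c * s * α := by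
    rw [hyf]
    have h1 : HasDerivAt (fun x => α * x) α x := by
      simpa using (hasDerivAt_id x).const_mul α
    have h2 : HasDerivAt (fun x => Real.cosh (α * x)) (s * α) x :=
      (Real.hasDerivAt_cosh (α * x)).comp x h1
    have h3 : HasDerivAt (fun x => Real.cosh (α * x) ^ 2)
        (2 * Real.cosh (α * x) ^ 1 * (s * α)) x := h2.pow 2
    simpa [pow_one, mul_comm, mul_assoc, mul_left_comm] using h3.deriv
  have hyx : y x = c ^ 2 := hy x
  have hR : (y x) ^ 2 - y x = c ^ 2 * s ^ 2 := by
    rw [hyx]; nlinarith [hid]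
  have hRne : (y x) ^ 2 - y x ≠ 0 := by
    rw [hR]; positivity
  have hs2 : (c:ℝ) ^ 2 = s ^ 2 + 1 := by nlinarith [hid]
  have hane : α ≠ 0 := ne_of_gt hα
  constructor
  · rw [hderiv, hyx]
    linear_combination (-4*α^2*c^4*(c^2-1)) * hs2
  · rw [hyx, hs2]
    have h1 : s ^ 2 + 1 ≠ 0 := by positivity
    have h2 : (s ^ 2 + 1) ^ 2 - (s ^ 2 + 1) ≠ 0 := by
      have : (s ^ 2 + 1) ^ 2 - (s ^ 2 + 1) = (s ^ 2 + 1) * s ^ 2 := by ring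
      rw [this]; positivity
    have h3 : (1 : ℝ) - (s ^ 2 + 1) ≠ 0 := by
      have : (1 : ℝ) - (s ^ 2 + 1) = -s ^ 2 := by ring
      rw [this]; simpa using pow_ne_zero 2 hsne
    field_simp [hsne, h1, h2, h3, hane]
    ring
end

section
/- Let k ∈ ℝ, κ > 0, and ρ, σ, ρ₁, σ₁ ∈ ℝ satisfy 1 − σ − σ₁ − σk²/κ ≥ 0 and ρ + ρ₁ + σ + σ₁ + (1+ρ+σ)k²/κ ≥ 0. Define the complex numbers c = 1 + √(1 − σ − σ₁ − σk²/κ), a = (1/2)·[ c + i·( √(ρ + ρ₁ + σ + σ₁ + (1+ρ+σ)k²/κ) + k/√κ ) ], and b = (1/2)·[ c + i·( √(ρ + ρ₁ + σ + σ₁ + (1+ρ+σ)k²/κ) − k/√κ ) ]. Then (a−b)² = −k²/κ, 2c − c² = σ·[1−(a−b)²] + σ₁, and 2·[c(a+b−1) − 2ab] = ρ·[1−(a−b)²] + ρ₁. -/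
open Complex in
/-- the hypergeometric parameters `a`, `b`, `c` built from Iwata's parameters
(case `κ > 0`) satisfy `(a−b)² = −k²/κ`, `2c − c² = σ[1−(a−b)²] + σ₁`, and
`2[c(a+b−1) − 2ab] = ρ[1−(a−b)²] + ρ₁`. -/
theorem stmt_4 (k κ ρ σ ρ₁ σ₁ : ℝ) (hκ : 0 < κ)
    (h1 : 0 ≤ 1 - σ - σ₁ - σ * k ^ 2 / κ)
    (h2 : 0 ≤ ρ + ρ₁ + σ + σ₁ + (1 + ρ + σ) * k ^ 2 / κ)
    (a b c : ℂ)
    (hc : c = 1 + (Real.sqrt (1 - σ - σ₁ - σ * k ^ 2 / κ) : ℝ))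
    (ha : a = (1 / 2) * (c + Complex.I *
      ((Real.sqrt (ρ + ρ₁ + σ + σ₁ + (1 + ρ + σ) * k ^ 2 / κ) : ℝ)
        + (k / Real.sqrt κ : ℝ))))
    (hb : b = (1 / 2) * (c + Complex.I *
      ((Real.sqrt (ρ + ρ₁ + σ + σ₁ + (1 + ρ + σ) * k ^ 2 / κ) : ℝ)
        - (k / Real.sqrt κ : ℝ)))) :
    (a - b) ^ 2 = -(k ^ 2 / κ : ℝ) ∧
    2 * c - c ^ 2 = (σ : ℂ) * (1 - (a - b) ^ 2) + (σ₁ : ℂ) ∧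
    2 * (c * (a + b - 1) - 2 * a * b) = (ρ : ℂ) * (1 - (a - b) ^ 2) + (ρ₁ : ℂ) := by
  have hS : ((Real.sqrt (1 - σ - σ₁ - σ * k ^ 2 / κ) : ℝ) : ℂ) ^ 2
      = ((1 - σ - σ₁ - σ * k ^ 2 / κ : ℝ) : ℂ) := by
    norm_cast; exact Real.sq_sqrt h1
  have hT : ((Real.sqrt (ρ + ρ₁ + σ + σ₁ + (1 + ρ + σ) * k ^ 2 / κ) : ℝ) : ℂ) ^ 2
      = ((ρ + ρ₁ + σ + σ₁ + (1 + ρ + σ) * k ^ 2 / κ : ℝ) : ℂ) := by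
    norm_cast; exact Real.sq_sqrt h2
  have hU : ((k / Real.sqrt κ : ℝ) : ℂ) ^ 2 = ((k ^ 2 / κ : ℝ) : ℂ) := by
    norm_cast
    rw [div_pow, Real.sq_sqrt hκ.le]
  have hI := Complex.I_sq
  subst ha hb hc
  refine ⟨?_, ?_, ?_⟩ <;> push_cast <;> push_cast at hS hT hU
  · linear_combination ((k : ℂ) / ((Real.sqrt κ : ℝ) : ℂ))^2 * hI - hU
  · linear_combination -hS + (σ : ℂ) * ((k : ℂ) / ((Real.sqrt κ : ℝ) : ℂ))^2 * hI - (σ : ℂ) * hU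
  · linear_combination hS + hT
      - ((Real.sqrt (ρ + ρ₁ + σ + σ₁ + (1 + ρ + σ) * k ^ 2 / κ) : ℝ) : ℂ)^2 * hI
      + (1 + ρ : ℂ) * ((k : ℂ) / ((Real.sqrt κ : ℝ) : ℂ))^2 * hI - (1 + ρ : ℂ) * hU
end

section
/- Let ρ̃, σ̃, ρ₂, σ₂ ∈ ℝ and κ̃ ∈ ℝ \ {0}, and set R̃(t) = ρ̃t² + σ̃t + 1. Let y be three times differentiable on an open interval I ⊆ ℝ with y'(x) ≠ 0, y(x) ∉ {0,1}, R̃(y(x)) ≠ 0, and (y'(x))²·R̃(y(x)) = 4κ̃·y(x)²·(1−y(x))² for all x ∈ I. Then for every x ∈ I (writing y = y(x)): (y''/(2y'))² − (d/dx)(y''/(2y')) − κ̃·(ρ₂y² + σ₂y)/R̃(y) = (κ̃·y²(1−y)²/R̃(y))·[ 1/(y²(1−y)²) + 2ρ̃/R̃(y) + (1−2y)(2ρ̃y+σ̃)/(y(1−y)R̃(y)) − 5(2ρ̃y+σ̃)²/(4R̃(y)²) ] − κ̃·(ρ₂y² + σ₂y)/R̃(y). -/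
/-- The quadratic `R̃(t) = ρ̃t² + σ̃t + 1` of Iwata's second case. -/
def iwataR2 (ρt σt : ℝ) : ℝ → ℝ := fun t => ρt * t ^ 2 + σt * t + 1

set_option maxHeartbeats 2000000 in
lemma iwata_alg (u v w z k p s r2 s2 : ℝ) (hv : v ≠ 0) (hu0 : u ≠ 0) (hu1 : (1:ℝ) - u ≠ 0)
    (hRn : p*u^2+s*u+1 ≠ 0)
    (A : v^2*(p*u^2+s*u+1) = 4*k*u^2*(1-u)^2)
    (B : 2*w*(p*u^2+s*u+1) + v^2*(2*p*u+s) = 8*k*(u*(1-u)^2 - u^2*(1-u)))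
    (C : 2*z*(p*u^2+s*u+1) + 4*v*w*(2*p*u+s) + 2*p*v^3 = 8*k*v*(1 - 6*u + 6*u^2)) :
    (w/(2*v))^2 - (z*(2*v) - w*(2*w))/((2*v)^2) - k*(r2*u^2+s2*u)/(p*u^2+s*u+1)
      = (k*u^2*(1-u)^2/(p*u^2+s*u+1)) *
          (1/(u^2*(1-u)^2) + 2*p/(p*u^2+s*u+1)
            + (1-2*u)*(2*p*u+s)/(u*(1-u)*(p*u^2+s*u+1))
            - 5*(2*p*u+s)^2/(4*(p*u^2+s*u+1)^2))
        - k*(r2*u^2+s2*u)/(p*u^2+s*u+1) := by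
  have hk : k = v^2*(p*u^2+s*u+1)/(4*u^2*(1-u)^2) := by
    rw [eq_div_iff (mul_ne_zero (mul_ne_zero four_ne_zero (pow_ne_zero 2 hu0)) (pow_ne_zero 2 hu1))]; linear_combination -A
  have hw : w = (8*k*(u*(1-u)^2 - u^2*(1-u)) - v^2*(2*p*u+s))/(2*(p*u^2+s*u+1)) := by
    rw [eq_div_iff (mul_ne_zero two_ne_zero hRn)]; linear_combination B
  have hz : z = (8*k*v*(1 - 6*u + 6*u^2) - 4*v*w*(2*p*u+s) - 2*p*v^3)/(2*(p*u^2+s*u+1)) := by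
    rw [eq_div_iff (mul_ne_zero two_ne_zero hRn)]; linear_combination C
  clear A B C
  have hRn' : u*(u*p+s)+1 ≠ 0 := by intro h; apply hRn; linear_combination h
  subst hz
  subst hw
  subst hk
  clear hRn'
  generalize hRdef : p*u^2+s*u+1 = R at hRn ⊢
  field_simp
  subst hRdef
  ring


/-- closed form of Iwata's second potential `V_II`. -/
theorem stmt_5 (ρt σt ρ₂ σ₂ κt : ℝ) (hκ : κt ≠ 0) (y : ℝ → ℝ) (I : Set ℝ) (hI : IsOpen I)
    (hy : ∀ x ∈ I, DifferentiableAt ℝ y x)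
    (hy' : ∀ x ∈ I, DifferentiableAt ℝ (deriv y) x)
    (hy'' : ∀ x ∈ I, DifferentiableAt ℝ (deriv (deriv y)) x)
    (hy0 : ∀ x ∈ I, deriv y x ≠ 0)
    (hy01 : ∀ x ∈ I, y x ≠ 0 ∧ y x ≠ 1)
    (hR : ∀ x ∈ I, iwataR2 ρt σt (y x) ≠ 0)
    (heq : ∀ x ∈ I, (deriv y x) ^ 2 * iwataR2 ρt σt (y x)
      = 4 * κt * (y x) ^ 2 * (1 - y x) ^ 2) :
    ∀ x ∈ I,
      (deriv (deriv y) x / (2 * deriv y x)) ^ 2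
          - deriv (fun t => deriv (deriv y) t / (2 * deriv y t)) x
          - κt * (ρ₂ * (y x) ^ 2 + σ₂ * y x) / iwataR2 ρt σt (y x)
        = (κt * (y x) ^ 2 * (1 - y x) ^ 2 / iwataR2 ρt σt (y x)) *
            (1 / ((y x) ^ 2 * (1 - y x) ^ 2) + 2 * ρt / iwataR2 ρt σt (y x)
              + (1 - 2 * y x) * (2 * ρt * y x + σt) / (y x * (1 - y x) * iwataR2 ρt σt (y x))
              - 5 * (2 * ρt * y x + σt) ^ 2 / (4 * (iwataR2 ρt σt (y x)) ^ 2))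
          - κt * (ρ₂ * (y x) ^ 2 + σ₂ * y x) / iwataR2 ρt σt (y x) := by
  -- Step 1: the first differentiated relation holds on all of I
  have hB : ∀ x ∈ I, 2 * deriv (deriv y) x * (ρt * (y x) ^ 2 + σt * y x + 1)
      + (deriv y x) ^ 2 * (2 * ρt * y x + σt)
      = 8 * κt * (y x * (1 - y x) ^ 2 - (y x) ^ 2 * (1 - y x)) := by
    intro x hx
    have h1 : HasDerivAt y (deriv y x) x := (hy x hx).hasDerivAt
    have h2 : HasDerivAt (deriv y) (deriv (deriv y) x) x := (hy' x hx).hasDerivAt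
    have hF : HasDerivAt
        (fun t => (deriv y t) ^ 2 * (ρt * (y t) ^ 2 + σt * y t + 1)
          - 4 * κt * ((y t) ^ 2 * (1 - y t) ^ 2))
        (2 * deriv y x * deriv (deriv y) x * (ρt * (y x) ^ 2 + σt * y x + 1)
          + (deriv y x) ^ 2 * ((2 * ρt * y x + σt) * deriv y x)
          - 4 * κt * (2 * y x * deriv y x * (1 - y x) ^ 2
              - (y x) ^ 2 * (2 * (1 - y x) * deriv y x))) x := by
      have hRy := (((h1.pow 2).const_mul ρt).add (h1.const_mul σt)).add_const 1
      have hA := (h2.pow 2).mul hRy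
      have hC := ((h1.pow 2).mul ((h1.const_sub 1).pow 2)).const_mul (4 * κt)
      refine (hA.sub hC).congr_deriv ?_
      push_cast
      simp only [Pi.add_apply, Pi.pow_apply]
      ring
    have h0 : deriv (fun t => (deriv y t) ^ 2 * (ρt * (y t) ^ 2 + σt * y t + 1)
        - 4 * κt * ((y t) ^ 2 * (1 - y t) ^ 2)) x = 0 := by
      have hev : (fun t => (deriv y t) ^ 2 * (ρt * (y t) ^ 2 + σt * y t + 1)
          - 4 * κt * ((y t) ^ 2 * (1 - y t) ^ 2)) =ᶠ[nhds x] (fun _ => (0 : ℝ)) := by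
        filter_upwards [hI.mem_nhds hx] with t ht
        have h := heq t ht
        simp only [iwataR2] at h
        linear_combination h
      rw [hev.deriv_eq]
      simp
    have hD0 := hF.deriv.symm.trans h0
    have hv := hy0 x hx
    have hfac : deriv y x *
        (2 * deriv (deriv y) x * (ρt * (y x) ^ 2 + σt * y x + 1)
          + (deriv y x) ^ 2 * (2 * ρt * y x + σt)
          - 8 * κt * (y x * (1 - y x) ^ 2 - (y x) ^ 2 * (1 - y x))) = 0 := by
      linear_combination hD0
    have := (mul_eq_zero.mp hfac).resolve_left hv
    linarith [this]
  -- Step 2: pointwise work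
  intro x hx
  have h1 : HasDerivAt y (deriv y x) x := (hy x hx).hasDerivAt
  have h2 : HasDerivAt (deriv y) (deriv (deriv y) x) x := (hy' x hx).hasDerivAt
  have h3 : HasDerivAt (deriv (deriv y)) (deriv (deriv (deriv y)) x) x := (hy'' x hx).hasDerivAt
  have hv := hy0 x hx
  obtain ⟨hu0, hu1⟩ := hy01 x hx
  have hu1' : (1 : ℝ) - y x ≠ 0 := sub_ne_zero.mpr (Ne.symm hu1)
  have hRn : ρt * (y x) ^ 2 + σt * y x + 1 ≠ 0 := by
    have := hR x hx; simpa [iwataR2] using this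
  -- second differentiated relation at x
  have hG : HasDerivAt
      (fun t => 2 * deriv (deriv y) t * (ρt * (y t) ^ 2 + σt * y t + 1)
        + (deriv y t) ^ 2 * (2 * ρt * y t + σt)
        - 8 * κt * (y t * (1 - y t) ^ 2 - (y t) ^ 2 * (1 - y t)))
      (2 * deriv (deriv (deriv y)) x * (ρt * (y x) ^ 2 + σt * y x + 1)
        + 2 * deriv (deriv y) x * ((2 * ρt * y x + σt) * deriv y x)
        + 2 * deriv y x * deriv (deriv y) x * (2 * ρt * y x + σt)
        + (deriv y x) ^ 2 * (2 * ρt * deriv y x)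
        - 8 * κt * ((deriv y x * (1 - y x) ^ 2 + y x * (2 * (1 - y x) * (-deriv y x)))
            - (2 * y x * deriv y x * (1 - y x) + (y x) ^ 2 * (-deriv y x)))) x := by
    have hRy := (((h1.pow 2).const_mul ρt).add (h1.const_mul σt)).add_const 1
    have hA := (h3.const_mul 2).mul hRy
    have hB2 := (h2.pow 2).mul ((h1.const_mul (2 * ρt)).add_const σt)
    have hC := ((h1.mul ((h1.const_sub 1).pow 2)).sub
      ((h1.pow 2).mul (h1.const_sub 1))).const_mul (8 * κt)
    refine ((hA.add hB2).sub hC).congr_deriv ?_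
    push_cast
    simp only [Pi.add_apply, Pi.pow_apply]
    ring
  have hG0 : deriv (fun t => 2 * deriv (deriv y) t * (ρt * (y t) ^ 2 + σt * y t + 1)
      + (deriv y t) ^ 2 * (2 * ρt * y t + σt)
      - 8 * κt * (y t * (1 - y t) ^ 2 - (y t) ^ 2 * (1 - y t))) x = 0 := by
    have hev : (fun t => 2 * deriv (deriv y) t * (ρt * (y t) ^ 2 + σt * y t + 1)
        + (deriv y t) ^ 2 * (2 * ρt * y t + σt)
        - 8 * κt * (y t * (1 - y t) ^ 2 - (y t) ^ 2 * (1 - y t))) =ᶠ[nhds x]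
        (fun _ => (0 : ℝ)) := by
      filter_upwards [hI.mem_nhds hx] with t ht
      have h := hB t ht
      linear_combination h
    rw [hev.deriv_eq]
    simp
  have hC : 2 * deriv (deriv (deriv y)) x * (ρt * (y x) ^ 2 + σt * y x + 1)
      + 4 * deriv y x * deriv (deriv y) x * (2 * ρt * y x + σt)
      + 2 * ρt * (deriv y x) ^ 3
      = 8 * κt * deriv y x * (1 - 6 * y x + 6 * (y x) ^ 2) := by
    have hD0 := hG.deriv.symm.trans hG0
    linear_combination hD0
  have hBx := hB x hx
  have hA : (deriv y x) ^ 2 * (ρt * (y x) ^ 2 + σt * y x + 1)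
      = 4 * κt * (y x) ^ 2 * (1 - y x) ^ 2 := by
    have := heq x hx; simpa [iwataR2] using this
  -- the derivative appearing in the goal
  have hq : HasDerivAt (fun t => deriv (deriv y) t / (2 * deriv y t))
      ((deriv (deriv (deriv y)) x * (2 * deriv y x)
        - deriv (deriv y) x * (2 * deriv (deriv y) x)) / (2 * deriv y x) ^ 2) x := by
    exact h3.div (h2.const_mul 2) (by simpa using hv)
  rw [hq.deriv]
  simp only [iwataR2]
  exact iwata_alg (y x) (deriv y x) (deriv (deriv y) x) (deriv (deriv (deriv y)) x)
    κt ρt σt ρ₂ σ₂ hv hu0 hu1' hRn hA (by linear_combination hBx) hC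
end

section
/- Let ρ̂, σ̂, ρ₃, σ₃ ∈ ℝ and κ̂ ∈ ℝ \ {0}, and set R̂(t) = ρ̂t² + t + σ̂. Let y be three times differentiable on an open interval I ⊆ ℝ with y'(x) ≠ 0, y(x) ∉ {0,1}, R̂(y(x)) ≠ 0, and (y'(x))²·R̂(y(x)) = 4κ̂·y(x)²·(1−y(x))² for all x ∈ I. Then for every x ∈ I (writing y = y(x)): (y''/(2y'))² − (d/dx)(y''/(2y')) − κ̂·(ρ₃y² + σ₃)/R̂(y) = (κ̂·y²(1−y)²/R̂(y))·[ 1/(y²(1−y)²) + 2ρ̂/R̂(y) + (1−2y)(2ρ̂y+1)/(y(1−y)R̂(y)) − 5(2ρ̂y+1)²/(4R̂(y)²) ] − κ̂·(ρ₃y² + σ₃)/R̂(y). -/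
/-- The quadratic `R̂(t) = ρ̂t² + t + σ̂` of Iwata's third case. -/
def iwataR3 (ρh σh : ℝ) : ℝ → ℝ := fun t => ρh * t ^ 2 + t + σh

lemma key (ρ σ κ Y U V W : ℝ) (hU : U ≠ 0) (hR : ρ*Y^2+Y+σ ≠ 0) (hY : Y ≠ 0) (hY1 : 1 - Y ≠ 0)
    (e0 : U^2*(ρ*Y^2+Y+σ) = 4*κ*Y^2*(1-Y)^2)
    (e1 : 2*V*(ρ*Y^2+Y+σ) + U^2*(2*ρ*Y+1) = 4*κ*(2*Y*(1-Y)^2 - 2*Y^2*(1-Y)))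
    (e2 : 2*W*(ρ*Y^2+Y+σ) + 4*U*V*(2*ρ*Y+1) + 2*ρ*U^3
        = 4*κ*(2*(1-Y)^2 - 8*Y*(1-Y) + 2*Y^2)*U) :
    (V/(2*U))^2 - (W*(2*U) - V*(2*V))/(2*U)^2
      = κ*Y^2*(1-Y)^2/(ρ*Y^2+Y+σ) *
        (1/(Y^2*(1-Y)^2) + 2*ρ/(ρ*Y^2+Y+σ)
          + (1-2*Y)*(2*ρ*Y+1)/(Y*(1-Y)*(ρ*Y^2+Y+σ))
          - 5*(2*ρ*Y+1)^2/(4*(ρ*Y^2+Y+σ)^2)) := by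
  set R := ρ*Y^2+Y+σ with hRdef
  have h1 : (V/(2*U))^2 - (W*(2*U) - V*(2*V))/(2*U)^2 = (3*V^2 - 2*U*W)/(4*U^2) := by
    field_simp
    ring
  have h2 : κ*Y^2*(1-Y)^2/R *
        (1/(Y^2*(1-Y)^2) + 2*ρ/R
          + (1-2*Y)*(2*ρ*Y+1)/(Y*(1-Y)*R)
          - 5*(2*ρ*Y+1)^2/(4*R^2))
      = κ*(4*R^2 + 8*ρ*(Y^2*(1-Y)^2)*R + 2*(2*Y*(1-Y)^2-2*Y^2*(1-Y))*(2*ρ*Y+1)*R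
            - 5*(Y^2*(1-Y)^2)*(2*ρ*Y+1)^2)/(4*R^3) := by
    field_simp
    ring
  rw [h1, h2, div_eq_div_iff (by positivity) (by positivity)]
  linear_combination (-5*(2*ρ*Y+1)^2*U^2 - 16*κ*(2*(1-Y)^2-8*Y*(1-Y)+2*Y^2)*R
      + 8*ρ*(U^2*R+4*κ*(Y^2*(1-Y)^2)) - 16*κ*R - 32*κ*ρ*(Y^2*(1-Y)^2)) * e0
    + (3*R*(2*V*R + 4*κ*(2*Y*(1-Y)^2-2*Y^2*(1-Y)) - U^2*(2*ρ*Y+1)) + 8*U^2*(2*ρ*Y+1)*R) * e1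
    + (-4*U*R^2) * e2

/-- closed form of Iwata's third potential `V_III`. -/
theorem stmt_6 (ρh σh ρ₃ σ₃ κh : ℝ) (hκ : κh ≠ 0) (y : ℝ → ℝ) (I : Set ℝ) (hI : IsOpen I)
    (hy : ∀ x ∈ I, DifferentiableAt ℝ y x)
    (hy' : ∀ x ∈ I, DifferentiableAt ℝ (deriv y) x)
    (hy'' : ∀ x ∈ I, DifferentiableAt ℝ (deriv (deriv y)) x)
    (hy0 : ∀ x ∈ I, deriv y x ≠ 0)
    (hy01 : ∀ x ∈ I, y x ≠ 0 ∧ y x ≠ 1)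
    (hR : ∀ x ∈ I, iwataR3 ρh σh (y x) ≠ 0)
    (heq : ∀ x ∈ I, (deriv y x) ^ 2 * iwataR3 ρh σh (y x)
      = 4 * κh * (y x) ^ 2 * (1 - y x) ^ 2) :
    ∀ x ∈ I,
      (deriv (deriv y) x / (2 * deriv y x)) ^ 2
          - deriv (fun t => deriv (deriv y) t / (2 * deriv y t)) x
          - κh * (ρ₃ * (y x) ^ 2 + σ₃) / iwataR3 ρh σh (y x)
        = (κh * (y x) ^ 2 * (1 - y x) ^ 2 / iwataR3 ρh σh (y x)) *
            (1 / ((y x) ^ 2 * (1 - y x) ^ 2) + 2 * ρh / iwataR3 ρh σh (y x)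
              + (1 - 2 * y x) * (2 * ρh * y x + 1) / (y x * (1 - y x) * iwataR3 ρh σh (y x))
              - 5 * (2 * ρh * y x + 1) ^ 2 / (4 * (iwataR3 ρh σh (y x)) ^ 2))
          - κh * (ρ₃ * (y x) ^ 2 + σ₃) / iwataR3 ρh σh (y x) := by
  simp only [iwataR3] at hR heq ⊢
  -- first derived equation, valid on all of I
  have e1 : ∀ t ∈ I, 2 * (deriv (deriv y) t) * (ρh*(y t)^2 + y t + σh)
      + (deriv y t)^2 * (2*ρh*(y t)+1)
      = 4*κh*(2*(y t*(1-y t)^2) - 2*((y t)^2*(1-y t))) := by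
    intro t ht
    have hyd : HasDerivAt y (deriv y t) t := (hy t ht).hasDerivAt
    have hyd' : HasDerivAt (deriv y) (deriv (deriv y) t) t := (hy' t ht).hasDerivAt
    have hRc : HasDerivAt (fun s => ρh*(y s)^2 + y s + σh)
        (ρh * (2 * y t ^ 1 * deriv y t) + deriv y t) t :=
      (((hyd.pow 2).const_mul ρh).add hyd).add_const σh
    have hf : HasDerivAt (fun s => (deriv y s)^2 * (ρh*(y s)^2 + y s + σh))
        ((2 * deriv y t ^ 1 * deriv (deriv y) t) * (ρh*(y t)^2 + y t + σh)
          + (deriv y t)^2 * (ρh * (2 * y t ^ 1 * deriv y t) + deriv y t)) t :=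
      (hyd'.pow 2).mul hRc
    have h1m : HasDerivAt (fun s => (1 - y s)^2)
        (2 * (1 - y t) ^ 1 * (0 - deriv y t)) t :=
      ((hasDerivAt_const t (1:ℝ)).sub hyd).pow 2
    have hg : HasDerivAt (fun s => 4*κh*(y s)^2 * (1 - y s)^2)
        ((4*κh) * (2 * y t ^ 1 * deriv y t) * (1 - y t)^2
          + (4*κh*(y t)^2) * (2 * (1 - y t) ^ 1 * (0 - deriv y t))) t := by
      exact (((hyd.pow 2).const_mul (4*κh)).mul h1m)
    have hfg : (fun s => (deriv y s)^2 * (ρh*(y s)^2 + y s + σh))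
        =ᶠ[nhds t] (fun s => 4*κh*(y s)^2 * (1 - y s)^2) := by
      filter_upwards [hI.mem_nhds ht] with s hs
      exact heq s hs
    have hf' : HasDerivAt (fun s => 4*κh*(y s)^2 * (1 - y s)^2)
        ((2 * deriv y t ^ 1 * deriv (deriv y) t) * (ρh*(y t)^2 + y t + σh)
          + (deriv y t)^2 * (ρh * (2 * y t ^ 1 * deriv y t) + deriv y t)) t :=
      (hfg.hasDerivAt_iff).mp hf
    have hraw := hf'.unique hg
    have hU := hy0 t ht
    apply mul_left_cancel₀ hU
    linear_combination hraw
  intro x hx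
  have hx0 := (hy01 x hx).1
  have hx1 : 1 - y x ≠ 0 := sub_ne_zero.mpr (Ne.symm (hy01 x hx).2)
  have hU := hy0 x hx
  -- second derived equation at x
  have e2 : 2 * (deriv (deriv (deriv y)) x) * (ρh*(y x)^2 + y x + σh)
      + 4 * (deriv y x) * (deriv (deriv y) x) * (2*ρh*(y x)+1)
      + 2*ρh*(deriv y x)^3
      = 4*κh*(2*(1-(y x))^2 - 8*(y x)*(1-(y x)) + 2*(y x)^2) * deriv y x := by
    have hyd : HasDerivAt y (deriv y x) x := (hy x hx).hasDerivAt
    have hyd' : HasDerivAt (deriv y) (deriv (deriv y) x) x := (hy' x hx).hasDerivAt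
    have hyd'' : HasDerivAt (deriv (deriv y)) (deriv (deriv (deriv y)) x) x :=
      (hy'' x hx).hasDerivAt
    have hRc : HasDerivAt (fun s => ρh*(y s)^2 + y s + σh)
        (ρh * (2 * y x ^ 1 * deriv y x) + deriv y x) x :=
      (((hyd.pow 2).const_mul ρh).add hyd).add_const σh
    have hf : HasDerivAt (fun s => 2 * (deriv (deriv y) s) * (ρh*(y s)^2 + y s + σh)
        + (deriv y s)^2 * (2*ρh*(y s)+1))
        ((2 * deriv (deriv (deriv y)) x) * (ρh*(y x)^2 + y x + σh)
          + (2 * deriv (deriv y) x) * (ρh * (2 * y x ^ 1 * deriv y x) + deriv y x)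
          + ((2 * deriv y x ^ 1 * deriv (deriv y) x) * (2*ρh*(y x)+1)
            + (deriv y x)^2 * (2*ρh*deriv y x))) x := by
      exact ((hyd''.const_mul 2).mul hRc).add
        ((hyd'.pow 2).mul (((hyd.const_mul (2*ρh))).add_const 1 |>.congr_deriv (by ring)))
    have h1s : HasDerivAt (fun s => (1 - y s)) (0 - deriv y x) x :=
      (hasDerivAt_const x (1:ℝ)).sub hyd
    have hA : HasDerivAt (fun s => y s * (1 - y s)^2)
        (deriv y x * (1 - y x)^2 + y x * (2 * (1 - y x) ^ 1 * (0 - deriv y x))) x :=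
      hyd.mul (h1s.pow 2)
    have hB : HasDerivAt (fun s => (y s)^2 * (1 - y s))
        ((2 * y x ^ 1 * deriv y x) * (1 - y x) + (y x)^2 * (0 - deriv y x)) x :=
      (hyd.pow 2).mul h1s
    have hg : HasDerivAt (fun s => 4*κh*(2*(y s*(1-y s)^2) - 2*((y s)^2*(1-y s))))
        (4*κh*(2*(deriv y x * (1 - y x)^2 + y x * (2 * (1 - y x) ^ 1 * (0 - deriv y x)))
          - 2*((2 * y x ^ 1 * deriv y x) * (1 - y x) + (y x)^2 * (0 - deriv y x)))) x :=
      ((hA.const_mul 2).sub (hB.const_mul 2)).const_mul (4*κh)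
    have hfg : (fun s => 2 * (deriv (deriv y) s) * (ρh*(y s)^2 + y s + σh)
        + (deriv y s)^2 * (2*ρh*(y s)+1))
        =ᶠ[nhds x] (fun s => 4*κh*(2*(y s*(1-y s)^2) - 2*((y s)^2*(1-y s)))) := by
      filter_upwards [hI.mem_nhds hx] with s hs
      exact e1 s hs
    have hraw := ((hfg.hasDerivAt_iff).mp hf).unique hg
    linear_combination hraw
  have hqd : HasDerivAt (fun t => deriv (deriv y) t / (2 * deriv y t))
      ((deriv (deriv (deriv y)) x * (2 * deriv y x)
        - deriv (deriv y) x * (2 * deriv (deriv y) x)) / (2 * deriv y x)^2) x :=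
    (hy'' x hx).hasDerivAt.div ((hy' x hx).hasDerivAt.const_mul 2)
      (mul_ne_zero two_ne_zero hU)
  rw [hqd.deriv]
  have hk := key ρh σh κh (y x) (deriv y x) (deriv (deriv y) x) (deriv (deriv (deriv y)) x)
    hU (hR x hx) hx0 hx1 (by linear_combination heq x hx)
    (by linear_combination e1 x hx) (by linear_combination e2)
  linear_combination hk
end

section
/- Let ρ, σ, ρ₁, σ₁ ∈ ℝ and κ ∈ ℝ \ {0}, and set R(t) = t² + ρt + σ. Define Natanzon parameters a = 1/κ, c₀ = σ/κ, c₁ = (1+ρ+σ)/κ, f = −1, h₀ = −(σ+σ₁), h₁ = −(1+ρ+ρ₁+σ+σ₁), and H(t) = at² + (c₁−c₀−a)t + c₀, Δ = (a−c₀−c₁)² − 4c₀c₁. Then H(t) = R(t)/κ for all t, and for every real y with y ∉ {0,1} and R(y) ≠ 0: (y²(1−y)²/H(y)²)·[ a + (a+(c₁−c₀)(2y−1))/(y(y−1)) − (5/4)·Δ/H(y) ] + (f·y(y−1) + h₀(1−y) + h₁y + 1)/H(y) = (κ·y²(1−y)²/R(y))·[ 1/(y²(1−y)²) + 2/R(y)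 + (1−2y)(2y+ρ)/(y(1−y)R(y)) − 5(2y+ρ)²/(4R(y)²) ] − κ·(y² + (ρ+ρ₁)y + σ+σ₁)/R(y). -/
set_option maxHeartbeats 2000000


/-- Natanzon's quadratic `H(t) = at² + (c₁−c₀−a)t + c₀`. -/
def natanzonH (a c₀ c₁ : ℝ) : ℝ → ℝ := fun t => a * t ^ 2 + (c₁ - c₀ - a) * t + c₀

/-- Iwata's first potential `V_I` is a Natanzon potential under the
substitution `a = 1/κ`, `c₀ = σ/κ`, `c₁ = (1+ρ+σ)/κ`, `f = −1`, `h₀ = −(σ+σ₁)`,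
`h₁ = −(1+ρ+ρ₁+σ+σ₁)`. -/
theorem stmt_8 (ρ σ ρ₁ σ₁ κ : ℝ) (hκ : κ ≠ 0)
    (a c₀ c₁ f h₀ h₁ : ℝ)
    (ha : a = 1 / κ) (hc₀ : c₀ = σ / κ) (hc₁ : c₁ = (1 + ρ + σ) / κ)
    (hf : f = -1) (hh₀ : h₀ = -(σ + σ₁)) (hh₁ : h₁ = -(1 + ρ + ρ₁ + σ + σ₁)) :
    (∀ t : ℝ, natanzonH a c₀ c₁ t = iwataR ρ σ t / κ) ∧
    ∀ y : ℝ, y ≠ 0 → y ≠ 1 → iwataR ρ σ y ≠ 0 →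
      (y ^ 2 * (1 - y) ^ 2 / (natanzonH a c₀ c₁ y) ^ 2) *
            (a + (a + (c₁ - c₀) * (2 * y - 1)) / (y * (y - 1))
              - (5 / 4) * ((a - c₀ - c₁) ^ 2 - 4 * c₀ * c₁) / natanzonH a c₀ c₁ y)
          + (f * y * (y - 1) + h₀ * (1 - y) + h₁ * y + 1) / natanzonH a c₀ c₁ y
        = (κ * y ^ 2 * (1 - y) ^ 2 / iwataR ρ σ y) *
            (1 / (y ^ 2 * (1 - y) ^ 2) + 2 / iwataR ρ σ y
              + (1 - 2 * y) * (2 * y + ρ) / (y * (1 - y) * iwataR ρ σ y)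
              - 5 * (2 * y + ρ) ^ 2 / (4 * (iwataR ρ σ y) ^ 2))
          - κ * (y ^ 2 + (ρ + ρ₁) * y + σ + σ₁) / iwataR ρ σ y := by
  have hH : ∀ t : ℝ, natanzonH a c₀ c₁ t = iwataR ρ σ t / κ := by
    intro t
    simp only [natanzonH, iwataR, ha, hc₀, hc₁]
    field_simp
    ring
  refine ⟨hH, ?_⟩
  intro y hy0 hy1 hR
  have hy1' : (1:ℝ) - y ≠ 0 := by intro h; apply hy1; linarith
  have hy1'' : y - 1 ≠ 0 := by intro h; apply hy1; linarith
  rw [hH y]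
  subst ha hc₀ hc₁ hf hh₀ hh₁
  simp only [iwataR] at hR ⊢
  have hR' : y * (y + ρ) + σ ≠ 0 := by rw [show y * (y + ρ) + σ = y ^ 2 + ρ * y + σ by ring]; exact hR
  field_simp
  ring
end

section
/- Let ρ̃, σ̃, ρ₂, σ₂ ∈ ℝ and κ̃ ∈ ℝ \ {0}, and set R̃(t) = ρ̃t² + σ̃t + 1. Define Natanzon parameters a = ρ̃/κ̃, c₀ = 1/κ̃, c₁ = (1+ρ̃+σ̃)/κ̃, f = −ρ₂, h₀ = 0, h₁ = −(ρ₂+σ₂), and H(t) = at² + (c₁−c₀−a)t + c₀, Δ = (a−c₀−c₁)² − 4c₀c₁. Then H(t) = R̃(t)/κ̃ for all t, and for every real y with y ∉ {0,1} and R̃(y) ≠ 0: (y²(1−y)²/H(y)²)·[ a + (a+(c₁−c₀)(2y−1))/(y(y−1)) − (5/4)·Δ/H(y) ] + (f·y(y−1) + h₀(1−y) + h₁y + 1)/H(y) = (κ̃·y²(1−y)²/R̃(y))·[ 1/(y²(1−y)²) + 2ρ̃/R̃(y) + (1−2y)(2ρ̃y+σ̃)/(y(1−y)R̃(y)) − 5(2ρ̃y+σ̃)²/(4R̃(y)²)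 ] − κ̃·(ρ₂y² + σ₂y)/R̃(y). -/
/-- Iwata's second potential `V_II` is a Natanzon potential under the
substitution `a = ρ̃/κ̃`, `c₀ = 1/κ̃`, `c₁ = (1+ρ̃+σ̃)/κ̃`, `f = −ρ₂`, `h₀ = 0`,
`h₁ = −(ρ₂+σ₂)`. -/
theorem stmt_9 (ρt σt ρ₂ σ₂ κt : ℝ) (hκ : κt ≠ 0)
    (a c₀ c₁ f h₀ h₁ : ℝ)
    (ha : a = ρt / κt) (hc₀ : c₀ = 1 / κt) (hc₁ : c₁ = (1 + ρt + σt) / κt)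
    (hf : f = -ρ₂) (hh₀ : h₀ = 0) (hh₁ : h₁ = -(ρ₂ + σ₂)) :
    (∀ t : ℝ, natanzonH a c₀ c₁ t = iwataR2 ρt σt t / κt) ∧
    ∀ y : ℝ, y ≠ 0 → y ≠ 1 → iwataR2 ρt σt y ≠ 0 →
      (y ^ 2 * (1 - y) ^ 2 / (natanzonH a c₀ c₁ y) ^ 2) *
            (a + (a + (c₁ - c₀) * (2 * y - 1)) / (y * (y - 1))
              - (5 / 4) * ((a - c₀ - c₁) ^ 2 - 4 * c₀ * c₁) / natanzonH a c₀ c₁ y)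
          + (f * y * (y - 1) + h₀ * (1 - y) + h₁ * y + 1) / natanzonH a c₀ c₁ y
        = (κt * y ^ 2 * (1 - y) ^ 2 / iwataR2 ρt σt y) *
            (1 / (y ^ 2 * (1 - y) ^ 2) + 2 * ρt / iwataR2 ρt σt y
              + (1 - 2 * y) * (2 * ρt * y + σt) / (y * (1 - y) * iwataR2 ρt σt y)
              - 5 * (2 * ρt * y + σt) ^ 2 / (4 * (iwataR2 ρt σt y) ^ 2))
          - κt * (ρ₂ * y ^ 2 + σ₂ * y) / iwataR2 ρt σt y := by
  have hH : ∀ t : ℝ, natanzonH a c₀ c₁ t = iwataR2 ρt σt t / κt := by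
    intro t
    simp only [natanzonH, iwataR2]
    rw [eq_div_iff hκ, ha, hc₀, hc₁]
    have h1 : (1 + ρt + σt) / κt - 1 / κt - ρt / κt = σt / κt := by
      field_simp; ring
    rw [h1]
    field_simp
  refine ⟨hH, ?_⟩
  intro y hy0 hy1 hR
  have hy1' : 1 - y ≠ 0 := by intro h; apply hy1; linarith
  have hy1'' : y - 1 ≠ 0 := by intro h; apply hy1; linarith
  rw [hH y]
  subst ha hc₀ hc₁ hf hh₀ hh₁
  simp only [iwataR2] at hR ⊢
  have hR2 : y * (y * ρt + σt) + 1 ≠ 0 := by convert hR using 1; ring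
  field_simp
  ring
end

section
/- Let ρ̂, σ̂, ρ₃, σ₃ ∈ ℝ and κ̂ ∈ ℝ \ {0}, and set R̂(t) = ρ̂t² + t + σ̂. Define Natanzon parameters a = ρ̂/κ̂, c₀ = σ̂/κ̂, c₁ = (1+ρ̂+σ̂)/κ̂, f = −ρ₃, h₀ = −σ₃, h₁ = −(ρ₃+σ₃), and H(t) = at² + (c₁−c₀−a)t + c₀, Δ = (a−c₀−c₁)² − 4c₀c₁. Then H(t) = R̂(t)/κ̂ for all t, and for every real y with y ∉ {0,1} and R̂(y) ≠ 0: (y²(1−y)²/H(y)²)·[ a + (a+(c₁−c₀)(2y−1))/(y(y−1)) − (5/4)·Δ/H(y) ] + (f·y(y−1) + h₀(1−y) + h₁y + 1)/H(y) = (κ̂·y²(1−y)²/R̂(y))·[ 1/(y²(1−y)²) + 2ρ̂/R̂(y) + (1−2y)(2ρ̂y+1)/(y(1−y)R̂(y)) − 5(2ρ̂y+1)²/(4R̂(y)²) ] − κ̂·(ρ₃y² + σ₃)/R̂(y). -/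
/-- Iwata's third potential `V_III` is a Natanzon potential under the
substitution `a = ρ̂/κ̂`, `c₀ = σ̂/κ̂`, `c₁ = (1+ρ̂+σ̂)/κ̂`, `f = −ρ₃`, `h₀ = −σ₃`,
`h₁ = −(ρ₃+σ₃)`. -/
theorem stmt_10 (ρh σh ρ₃ σ₃ κh : ℝ) (hκ : κh ≠ 0)
    (a c₀ c₁ f h₀ h₁ : ℝ)
    (ha : a = ρh / κh) (hc₀ : c₀ = σh / κh) (hc₁ : c₁ = (1 + ρh + σh) / κh)
    (hf : f = -ρ₃) (hh₀ : h₀ = -σ₃) (hh₁ : h₁ = -(ρ₃ + σ₃)) :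
    (∀ t : ℝ, natanzonH a c₀ c₁ t = iwataR3 ρh σh t / κh) ∧
    ∀ y : ℝ, y ≠ 0 → y ≠ 1 → iwataR3 ρh σh y ≠ 0 →
      (y ^ 2 * (1 - y) ^ 2 / (natanzonH a c₀ c₁ y) ^ 2) *
            (a + (a + (c₁ - c₀) * (2 * y - 1)) / (y * (y - 1))
              - (5 / 4) * ((a - c₀ - c₁) ^ 2 - 4 * c₀ * c₁) / natanzonH a c₀ c₁ y)
          + (f * y * (y - 1) + h₀ * (1 - y) + h₁ * y + 1) / natanzonH a c₀ c₁ y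
        = (κh * y ^ 2 * (1 - y) ^ 2 / iwataR3 ρh σh y) *
            (1 / (y ^ 2 * (1 - y) ^ 2) + 2 * ρh / iwataR3 ρh σh y
              + (1 - 2 * y) * (2 * ρh * y + 1) / (y * (1 - y) * iwataR3 ρh σh y)
              - 5 * (2 * ρh * y + 1) ^ 2 / (4 * (iwataR3 ρh σh y) ^ 2))
          - κh * (ρ₃ * y ^ 2 + σ₃) / iwataR3 ρh σh y := by
  have hH : ∀ t : ℝ, natanzonH a c₀ c₁ t = iwataR3 ρh σh t / κh := by
    intro t
    simp only [natanzonH, iwataR3, ha, hc₀, hc₁]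
    field_simp
    ring
  refine ⟨hH, ?_⟩
  intro y hy0 hy1 hR
  have hy1' : 1 - y ≠ 0 := sub_ne_zero.mpr (Ne.symm hy1)
  have hy1'' : y - 1 ≠ 0 := sub_ne_zero.mpr hy1
  rw [hH y]
  simp only [natanzonH, iwataR3, ha, hc₀, hc₁, hf, hh₀, hh₁] at *
  have hR' : y * (y * ρh + 1) + σh ≠ 0 := by convert hR using 1; ring
  field_simp
  ring
end

section
/- Let ρ, σ, ρ₁, σ₁ ∈ ℝ, set R(t) = t² + ρt + σ, q(t) = R(t)³, and p(t) = a₀ + a₁t + a₂t² + a₃t³ + a₄t⁴ + a₅t⁵ with a₀ = 4σ²(σ+σ₁−1), a₁ = 4σ(ρ₁σ + 3ρσ + 2σ₁ρ − 3ρ), a₂ = 12ρσ + 12σ² + 8ρρ₁σ − 3ρ² + 4σ₁ρ² + 12ρ²σ − 24σ + 8σ₁σ, a₃ = 16ρσ + 40σ + 8σ₁ρ + 4ρ₁ρ² + 8ρ₁σ + 4ρ³ + 2ρ² − 8ρ, a₄ = 9ρ² + 4σ₁ − 12σ + 8ρ₁ρ + 12ρ, a₅ = 4ρ₁. Let D ⊆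 ℝ satisfy −x ∈ D whenever x ∈ D, let y : D → ℝ, set v(x) = y(−x), and assume y(x₀) ≠ v(x₀) for at least one x₀ ∈ D and q(y(x)) ≠ 0 and q(v(x)) ≠ 0 for all x ∈ D. Define V_I(x) = −p(y(x))/(4·q(y(x))). If the functions in the family 𝒰 = { yⁿ−vⁿ : n = 1,…,6 } ∪ { v⁶yⁿ − y⁶vⁿ : n = 1,…,5 } ∪ { yᵐvⁿ − vᵐyⁿ : 1 ≤ n < m ≤ 5 } (as functions D → ℝ) are linearly independent over ℝ, and if V_I(x) = V_I(−x) for all x ∈ D, then V_I(x) = 0 for all x ∈ D. -/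
/-- `q(t) = (t² + ρt + σ)³`, the denominator of Iwata's potential. -/
def iwataQ (ρ σ : ℝ) : ℝ → ℝ := fun t => (t ^ 2 + ρ * t + σ) ^ 3

/-- `p(t)`, the numerator polynomial of Iwata's potential. -/
def iwataP (ρ σ ρ₁ σ₁ : ℝ) : ℝ → ℝ := fun t =>
  4 * σ ^ 2 * (σ + σ₁ - 1)
    + (4 * σ * (ρ₁ * σ + 3 * ρ * σ + 2 * σ₁ * ρ - 3 * ρ)) * t
    + (12 * ρ * σ + 12 * σ ^ 2 + 8 * ρ * ρ₁ * σ - 3 * ρ ^ 2 + 4 * σ₁ * ρ ^ 2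
        + 12 * ρ ^ 2 * σ - 24 * σ + 8 * σ₁ * σ) * t ^ 2
    + (16 * ρ * σ + 40 * σ + 8 * σ₁ * ρ + 4 * ρ₁ * ρ ^ 2 + 8 * ρ₁ * σ + 4 * ρ ^ 3
        + 2 * ρ ^ 2 - 8 * ρ) * t ^ 3
    + (9 * ρ ^ 2 + 4 * σ₁ - 12 * σ + 8 * ρ₁ * ρ + 12 * ρ) * t ^ 4
    + (4 * ρ₁) * t ^ 5

/-- Coefficients of `iwataP` as a function of the degree. -/
def iwataA (ρ σ ρ₁ σ₁ : ℝ) : ℕ → ℝ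
  | 0 => 4 * σ ^ 2 * (σ + σ₁ - 1)
  | 1 => 4 * σ * (ρ₁ * σ + 3 * ρ * σ + 2 * σ₁ * ρ - 3 * ρ)
  | 2 => 12 * ρ * σ + 12 * σ ^ 2 + 8 * ρ * ρ₁ * σ - 3 * ρ ^ 2 + 4 * σ₁ * ρ ^ 2
        + 12 * ρ ^ 2 * σ - 24 * σ + 8 * σ₁ * σ
  | 3 => 16 * ρ * σ + 40 * σ + 8 * σ₁ * ρ + 4 * ρ₁ * ρ ^ 2 + 8 * ρ₁ * σ + 4 * ρ ^ 3
        + 2 * ρ ^ 2 - 8 * ρ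
  | 4 => 9 * ρ ^ 2 + 4 * σ₁ - 12 * σ + 8 * ρ₁ * ρ + 12 * ρ
  | 5 => 4 * ρ₁
  | _ => 0

/-- Coefficients of `iwataQ` as a function of the degree. -/
def iwataB (ρ σ : ℝ) : ℕ → ℝ
  | 0 => σ ^ 3
  | 1 => 3 * ρ * σ ^ 2
  | 2 => 3 * σ ^ 2 + 3 * ρ ^ 2 * σ
  | 3 => ρ ^ 3 + 6 * ρ * σ
  | 4 => 3 * σ + 3 * ρ ^ 2
  | 5 => 3 * ρ
  | 6 => 1
  | _ => 0

set_option maxRecDepth 10000 in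
set_option maxHeartbeats 2000000 in
lemma iwata_sum_lt_pairs (f : Fin 5 × Fin 5 → ℝ) :
    ∑ i : {p : Fin 5 × Fin 5 // p.2 < p.1}, f i.1
      = f (1,0) + f (2,0) + f (2,1) + f (3,0) + f (3,1) + f (3,2)
        + f (4,0) + f (4,1) + f (4,2) + f (4,3) := by
  have h : ∑ p ∈ Finset.univ.filter (fun p : Fin 5 × Fin 5 => p.2 < p.1), f p
      = ∑ i : {p : Fin 5 × Fin 5 // p.2 < p.1}, f i.1 :=
    Finset.sum_subtype _ (by simp) f
  rw [← h, Finset.sum_filter, Fintype.sum_prod_type]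
  simp only [Fin.sum_univ_five,
    if_neg (show ¬(0:Fin 5) < 0 by decide), if_neg (show ¬(1:Fin 5) < 0 by decide),
    if_neg (show ¬(2:Fin 5) < 0 by decide), if_neg (show ¬(3:Fin 5) < 0 by decide),
    if_neg (show ¬(4:Fin 5) < 0 by decide), if_neg (show ¬(1:Fin 5) < 1 by decide),
    if_neg (show ¬(2:Fin 5) < 1 by decide), if_neg (show ¬(3:Fin 5) < 1 by decide),
    if_neg (show ¬(4:Fin 5) < 1 by decide), if_neg (show ¬(2:Fin 5) < 2 by decide),
    if_neg (show ¬(3:Fin 5) < 2 by decide), if_neg (show ¬(4:Fin 5) < 2 by decide),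
    if_neg (show ¬(3:Fin 5) < 3 by decide), if_neg (show ¬(4:Fin 5) < 3 by decide),
    if_neg (show ¬(4:Fin 5) < 4 by decide),
    if_pos (show (0:Fin 5) < 1 by decide), if_pos (show (0:Fin 5) < 2 by decide),
    if_pos (show (1:Fin 5) < 2 by decide), if_pos (show (0:Fin 5) < 3 by decide),
    if_pos (show (1:Fin 5) < 3 by decide), if_pos (show (2:Fin 5) < 3 by decide),
    if_pos (show (0:Fin 5) < 4 by decide), if_pos (show (1:Fin 5) < 4 by decide),
    if_pos (show (2:Fin 5) < 4 by decide), if_pos (show (3:Fin 5) < 4 by decide)]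
  ring

set_option maxRecDepth 10000 in
set_option maxHeartbeats 4000000 in
/-- if the coordinate transformation `y` is nonsymmetric and the family `𝒰`
of functions on `D` is linearly independent, then a symmetric Iwata potential
`V_I(x) = −p(y(x))/(4q(y(x)))` must vanish identically on `D`. -/
theorem stmt_11 (ρ σ ρ₁ σ₁ : ℝ) (D : Set ℝ) (hDsymm : ∀ x ∈ D, -x ∈ D)
    (y v : ℝ → ℝ) (hv : ∀ x, v x = y (-x))
    (hne : ∃ x₀ ∈ D, y x₀ ≠ v x₀)
    (hq : ∀ x ∈ D, iwataQ ρ σ (y x) ≠ 0 ∧ iwataQ ρ σ (v x) ≠ 0)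
    (hU : LinearIndependent ℝ
      (fun i : Fin 6 ⊕ Fin 5 ⊕ {p : Fin 5 × Fin 5 // p.2 < p.1} =>
        (fun x : D => match i with
          | Sum.inl n => y x ^ ((n : ℕ) + 1) - v x ^ ((n : ℕ) + 1)
          | Sum.inr (Sum.inl n) =>
              v x ^ 6 * y x ^ ((n : ℕ) + 1) - y x ^ 6 * v x ^ ((n : ℕ) + 1)
          | Sum.inr (Sum.inr ⟨(m, n), _⟩) =>
              y x ^ ((m : ℕ) + 1) * v x ^ ((n : ℕ) + 1)
                - v x ^ ((m : ℕ) + 1) * y x ^ ((n : ℕ) + 1) : D → ℝ)))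
    (hsymm : ∀ x ∈ D,
      -(iwataP ρ σ ρ₁ σ₁ (y x)) / (4 * iwataQ ρ σ (y x))
        = -(iwataP ρ σ ρ₁ σ₁ (y (-x))) / (4 * iwataQ ρ σ (y (-x)))) :
    ∀ x ∈ D, -(iwataP ρ σ ρ₁ σ₁ (y x)) / (4 * iwataQ ρ σ (y x)) = 0 := by
  classical
  set a := iwataA ρ σ ρ₁ σ₁ with ha
  set b := iwataB ρ σ with hb
  -- cross-multiplied symmetry condition
  have key : ∀ x ∈ D,
      iwataP ρ σ ρ₁ σ₁ (y x) * iwataQ ρ σ (v x)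
        = iwataP ρ σ ρ₁ σ₁ (v x) * iwataQ ρ σ (y x) := by
    intro x hx
    have h := hsymm x hx
    rw [← hv x] at h
    obtain ⟨hq1, hq2⟩ := hq x hx
    have h4 : (4 : ℝ) * iwataQ ρ σ (y x) ≠ 0 := mul_ne_zero (by norm_num) hq1
    have h4' : (4 : ℝ) * iwataQ ρ σ (v x) ≠ 0 := mul_ne_zero (by norm_num) hq2
    rw [div_eq_div_iff h4 h4'] at h
    nlinarith [h]
  -- the coefficient vector
  set g : Fin 6 ⊕ Fin 5 ⊕ {p : Fin 5 × Fin 5 // p.2 < p.1} → ℝ :=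
    Sum.elim (fun n : Fin 6 => a ((n : ℕ) + 1) * b 0 - a 0 * b ((n : ℕ) + 1))
      (Sum.elim (fun n : Fin 5 => a ((n : ℕ) + 1))
        (fun q : {p : Fin 5 × Fin 5 // p.2 < p.1} =>
          a ((q.1.1 : ℕ) + 1) * b ((q.1.2 : ℕ) + 1)
            - a ((q.1.2 : ℕ) + 1) * b ((q.1.1 : ℕ) + 1))) with hg
  have hA0 : a 0 = 4 * σ ^ 2 * (σ + σ₁ - 1) := rfl
  have hA1 : a 1 = 4 * σ * (ρ₁ * σ + 3 * ρ * σ + 2 * σ₁ * ρ - 3 * ρ) := rfl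
  have hA2 : a 2 = 12 * ρ * σ + 12 * σ ^ 2 + 8 * ρ * ρ₁ * σ - 3 * ρ ^ 2 + 4 * σ₁ * ρ ^ 2
      + 12 * ρ ^ 2 * σ - 24 * σ + 8 * σ₁ * σ := rfl
  have hA3 : a 3 = 16 * ρ * σ + 40 * σ + 8 * σ₁ * ρ + 4 * ρ₁ * ρ ^ 2 + 8 * ρ₁ * σ + 4 * ρ ^ 3
      + 2 * ρ ^ 2 - 8 * ρ := rfl
  have hA4 : a 4 = 9 * ρ ^ 2 + 4 * σ₁ - 12 * σ + 8 * ρ₁ * ρ + 12 * ρ := rfl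
  have hA5 : a 5 = 4 * ρ₁ := rfl
  have hA6 : a 6 = 0 := rfl
  have hB0 : b 0 = σ ^ 3 := rfl
  have hB1 : b 1 = 3 * ρ * σ ^ 2 := rfl
  have hB2 : b 2 = 3 * σ ^ 2 + 3 * ρ ^ 2 * σ := rfl
  have hB3 : b 3 = ρ ^ 3 + 6 * ρ * σ := rfl
  have hB4 : b 4 = 3 * σ + 3 * ρ ^ 2 := rfl
  have hB5 : b 5 = 3 * ρ := rfl
  have hB6 : b 6 = 1 := rfl
  have hcoef := Fintype.linearIndependent_iff.mp hU g ?hsum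
  case hsum =>
    funext z
    obtain ⟨x, hx⟩ := z
    have hk := key x hx
    simp only [iwataP, iwataQ] at hk
    simp only [Finset.sum_apply, Pi.smul_apply, smul_eq_mul, Pi.zero_apply]
    rw [Fintype.sum_sum_type, Fintype.sum_sum_type]
    rw [Fin.sum_univ_six, Fin.sum_univ_five]
    have hpair : ∀ (i : {p : Fin 5 × Fin 5 // p.2 < p.1}) (w : ℝ),
        (w * match (Sum.inr (Sum.inr i) : Fin 6 ⊕ Fin 5 ⊕ {p : Fin 5 × Fin 5 // p.2 < p.1}) with
          | Sum.inl n => y x ^ ((n : ℕ) + 1) - v x ^ ((n : ℕ) + 1)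
          | Sum.inr (Sum.inl n) =>
              v x ^ 6 * y x ^ ((n : ℕ) + 1) - y x ^ 6 * v x ^ ((n : ℕ) + 1)
          | Sum.inr (Sum.inr ⟨(m, n), _⟩) =>
              y x ^ ((m : ℕ) + 1) * v x ^ ((n : ℕ) + 1)
                - v x ^ ((m : ℕ) + 1) * y x ^ ((n : ℕ) + 1))
        = w * (y x ^ ((i.1.1 : ℕ) + 1) * v x ^ ((i.1.2 : ℕ) + 1)
                - v x ^ ((i.1.1 : ℕ) + 1) * y x ^ ((i.1.2 : ℕ) + 1)) := by
      rintro ⟨⟨m, n⟩, h⟩ w; rfl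
    simp only [hpair, hg, Sum.elim_inl, Sum.elim_inr,
      show ((0 : Fin 6) : ℕ) = 0 from rfl, show ((1 : Fin 6) : ℕ) = 1 from rfl,
      show ((2 : Fin 6) : ℕ) = 2 from rfl, show ((3 : Fin 6) : ℕ) = 3 from rfl,
      show ((4 : Fin 6) : ℕ) = 4 from rfl, show ((5 : Fin 6) : ℕ) = 5 from rfl,
      show ((0 : Fin 5) : ℕ) = 0 from rfl, show ((1 : Fin 5) : ℕ) = 1 from rfl,
      show ((2 : Fin 5) : ℕ) = 2 from rfl, show ((3 : Fin 5) : ℕ) = 3 from rfl,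
      show ((4 : Fin 5) : ℕ) = 4 from rfl]
    rw [iwata_sum_lt_pairs (f := fun p : Fin 5 × Fin 5 =>
      (a ((p.1 : ℕ) + 1) * b ((p.2 : ℕ) + 1) - a ((p.2 : ℕ) + 1) * b ((p.1 : ℕ) + 1))
        * (y x ^ ((p.1 : ℕ) + 1) * v x ^ ((p.2 : ℕ) + 1)
            - v x ^ ((p.1 : ℕ) + 1) * y x ^ ((p.2 : ℕ) + 1)))]
    simp only [show ((0 : Fin 5) : ℕ) = 0 from rfl, show ((1 : Fin 5) : ℕ) = 1 from rfl,
      show ((2 : Fin 5) : ℕ) = 2 from rfl, show ((3 : Fin 5) : ℕ) = 3 from rfl,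
      show ((4 : Fin 5) : ℕ) = 4 from rfl]
    simp only [hA0, hA1, hA2, hA3, hA4, hA5, hA6, hB0, hB1, hB2, hB3, hB4, hB5, hB6]
    norm_num
    linear_combination hk
  -- extract the vanishing of the coefficients of p
  have e1 : a 1 = 0 := by
    have h := hcoef (Sum.inr (Sum.inl 0)); simpa [hg] using h
  have e2 : a 2 = 0 := by
    have h := hcoef (Sum.inr (Sum.inl 1)); simpa [hg] using h
  have e3 : a 3 = 0 := by
    have h := hcoef (Sum.inr (Sum.inl 2)); simpa [hg] using h
  have e4 : a 4 = 0 := by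
    have h := hcoef (Sum.inr (Sum.inl 3)); simpa [hg] using h
  have e5 : a 5 = 0 := by
    have h := hcoef (Sum.inr (Sum.inl 4)); simpa [hg] using h
  have e0 : a 0 = 0 := by
    have h := hcoef (Sum.inl 5)
    simp only [hg, Sum.elim_inl, show ((5 : Fin 6) : ℕ) = 5 from rfl] at h
    rw [hA6, hB6] at h; linarith
  intro x hx
  have hP : iwataP ρ σ ρ₁ σ₁ (y x) = 0 := by
    rw [hA0] at e0; rw [hA1] at e1; rw [hA2] at e2; rw [hA3] at e3
    rw [hA4] at e4; rw [hA5] at e5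
    simp only [iwataP]
    linear_combination e0 + e1 * y x + e2 * y x ^ 2 + e3 * y x ^ 3 + e4 * y x ^ 4
      + e5 * y x ^ 5
  rw [hP, neg_zero, zero_div]
end

section
/- Let σ₀,…,σ₄, τ₀,…,τ₄ ∈ ℝ. Define R(t) = σ₀t² + σ₁(t−1)² + σ₂t²(t−1)² + σ₃t²(t−1) + σ₄t(t−1) and S(t) = τ₀t² + τ₁(t−1)² + τ₂t²(t−1)² + τ₃t²(t−1) + τ₄t(t−1). Let y be three times differentiable on an open interval I ⊆ ℝ with y'(x) ≠ 0, y(x) ∉ {0,1}, R(y(x)) ≠ 0, and (y'(x))² = 4·y(x)²·(y(x)−1)²/R(y(x)) for all x ∈ I. Then for every x ∈ I (writing y = y(x)): −S(y)/R(y) − (1/2)·{y,x}(x) = (y²(y−1)²/R(y)²)·[ R''(y) + ((2y−1)·R'(y) − 4·R(y))/(y(y−1)) + (2y−1)²·R(y)/(y²(y−1)²) − (5/4)·R'(y)²/R(y) ] − S(y)/R(y). -/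
/-- The polynomial `R` of the confluent-Heun-class Bose invariant. -/
def cheunR (σ₀ σ₁ σ₂ σ₃ σ₄ : ℝ) : ℝ → ℝ := fun t =>
  σ₀ * t ^ 2 + σ₁ * (t - 1) ^ 2 + σ₂ * t ^ 2 * (t - 1) ^ 2
    + σ₃ * t ^ 2 * (t - 1) + σ₄ * t * (t - 1)

/-- The polynomial `S` of the confluent-Heun-class Bose invariant. -/
def cheunS (τ₀ τ₁ τ₂ τ₃ τ₄ : ℝ) : ℝ → ℝ := fun t =>
  τ₀ * t ^ 2 + τ₁ * (t - 1) ^ 2 + τ₂ * t ^ 2 * (t - 1) ^ 2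
    + τ₃ * t ^ 2 * (t - 1) + τ₄ * t * (t - 1)

/-- First derivative of `cheunR`. -/
noncomputable def cRd (σ₀ σ₁ σ₂ σ₃ σ₄ : ℝ) : ℝ → ℝ := fun t =>
  σ₀ * (2 * t) + σ₁ * (2 * (t - 1)) + σ₂ * (2 * t * (t - 1) ^ 2 + 2 * t ^ 2 * (t - 1))
    + σ₃ * (2 * t * (t - 1) + t ^ 2) + σ₄ * (2 * t - 1)

/-- Second derivative of `cheunR`. -/
noncomputable def cRdd (σ₀ σ₁ σ₂ σ₃ σ₄ : ℝ) : ℝ → ℝ := fun t =>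
  σ₀ * 2 + σ₁ * 2 + σ₂ * (2 * (t - 1) ^ 2 + 8 * t * (t - 1) + 2 * t ^ 2)
    + σ₃ * (6 * t - 2) + σ₄ * 2

/-- Derivative of `g t = 4 t² (t-1)² / R t`. -/
noncomputable def cGd (σ₀ σ₁ σ₂ σ₃ σ₄ : ℝ) : ℝ → ℝ := fun t =>
  ((8 * t * (t - 1) ^ 2 + 8 * t ^ 2 * (t - 1)) * cheunR σ₀ σ₁ σ₂ σ₃ σ₄ t
      - 4 * t ^ 2 * (t - 1) ^ 2 * cRd σ₀ σ₁ σ₂ σ₃ σ₄ t) / cheunR σ₀ σ₁ σ₂ σ₃ σ₄ t ^ 2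

/-- Second derivative of `g t = 4 t² (t-1)² / R t`. -/
noncomputable def cGdd (σ₀ σ₁ σ₂ σ₃ σ₄ : ℝ) : ℝ → ℝ := fun t =>
  (((8 * (t - 1) ^ 2 + 32 * t * (t - 1) + 8 * t ^ 2) * cheunR σ₀ σ₁ σ₂ σ₃ σ₄ t
        - 4 * t ^ 2 * (t - 1) ^ 2 * cRdd σ₀ σ₁ σ₂ σ₃ σ₄ t) * cheunR σ₀ σ₁ σ₂ σ₃ σ₄ t
      - 2 * ((8 * t * (t - 1) ^ 2 + 8 * t ^ 2 * (t - 1)) * cheunR σ₀ σ₁ σ₂ σ₃ σ₄ t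
        - 4 * t ^ 2 * (t - 1) ^ 2 * cRd σ₀ σ₁ σ₂ σ₃ σ₄ t) * cRd σ₀ σ₁ σ₂ σ₃ σ₄ t)
    / cheunR σ₀ σ₁ σ₂ σ₃ σ₄ t ^ 3

lemma hasDerivAt_cheunR (σ₀ σ₁ σ₂ σ₃ σ₄ t : ℝ) :
    HasDerivAt (cheunR σ₀ σ₁ σ₂ σ₃ σ₄) (cRd σ₀ σ₁ σ₂ σ₃ σ₄ t) t := by
  have hid : HasDerivAt (fun x : ℝ => x) 1 t := hasDerivAt_id t
  have hs : HasDerivAt (fun x : ℝ => x - 1) 1 t := hid.sub_const 1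
  have H := (((((hid.pow 2).const_mul σ₀).add ((hs.pow 2).const_mul σ₁)).add
      (((hid.pow 2).const_mul σ₂).mul (hs.pow 2))).add
      (((hid.pow 2).const_mul σ₃).mul hs)).add ((hid.const_mul σ₄).mul hs)
  refine H.congr_deriv ?_
  unfold cRd
  push_cast
  simp only [Pi.pow_apply]
  ring

lemma hasDerivAt_cRd (σ₀ σ₁ σ₂ σ₃ σ₄ t : ℝ) :
    HasDerivAt (cRd σ₀ σ₁ σ₂ σ₃ σ₄) (cRdd σ₀ σ₁ σ₂ σ₃ σ₄ t) t := by
  have hid : HasDerivAt (fun x : ℝ => x) 1 t := hasDerivAt_id t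
  have hs : HasDerivAt (fun x : ℝ => x - 1) 1 t := hid.sub_const 1
  have hA := (hid.const_mul (2:ℝ)).const_mul σ₀
  have hB := (hs.const_mul (2:ℝ)).const_mul σ₁
  have hC := (((hid.const_mul (2:ℝ)).mul (hs.pow 2)).add
      (((hid.pow 2).const_mul (2:ℝ)).mul hs)).const_mul σ₂
  have hD := (((hid.const_mul (2:ℝ)).mul hs).add (hid.pow 2)).const_mul σ₃
  have hE := ((hid.const_mul (2:ℝ)).sub_const 1).const_mul σ₄
  have H := (((hA.add hB).add hC).add hD).add hE
  refine H.congr_deriv ?_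
  unfold cRdd
  push_cast
  simp only [Pi.pow_apply]
  ring

lemma deriv_cheunR (σ₀ σ₁ σ₂ σ₃ σ₄ : ℝ) :
    deriv (cheunR σ₀ σ₁ σ₂ σ₃ σ₄) = cRd σ₀ σ₁ σ₂ σ₃ σ₄ :=
  funext fun t => (hasDerivAt_cheunR σ₀ σ₁ σ₂ σ₃ σ₄ t).deriv

lemma deriv2_cheunR (σ₀ σ₁ σ₂ σ₃ σ₄ t : ℝ) :
    deriv (deriv (cheunR σ₀ σ₁ σ₂ σ₃ σ₄)) t = cRdd σ₀ σ₁ σ₂ σ₃ σ₄ t := by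
  rw [deriv_cheunR]
  exact (hasDerivAt_cRd σ₀ σ₁ σ₂ σ₃ σ₄ t).deriv

lemma hasDerivAt_num (t : ℝ) :
    HasDerivAt (fun s : ℝ => 4 * s ^ 2 * (s - 1) ^ 2)
      (8 * t * (t - 1) ^ 2 + 8 * t ^ 2 * (t - 1)) t := by
  have hid : HasDerivAt (fun x : ℝ => x) 1 t := hasDerivAt_id t
  have hs : HasDerivAt (fun x : ℝ => x - 1) 1 t := hid.sub_const 1
  have H := ((hid.pow 2).const_mul 4).mul (hs.pow 2)
  refine H.congr_deriv ?_
  push_cast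
  simp only [Pi.pow_apply]
  ring

lemma hasDerivAt_numd (t : ℝ) :
    HasDerivAt (fun s : ℝ => 8 * s * (s - 1) ^ 2 + 8 * s ^ 2 * (s - 1))
      (8 * (t - 1) ^ 2 + 32 * t * (t - 1) + 8 * t ^ 2) t := by
  have hid : HasDerivAt (fun x : ℝ => x) 1 t := hasDerivAt_id t
  have hs : HasDerivAt (fun x : ℝ => x - 1) 1 t := hid.sub_const 1
  have H := ((hid.const_mul 8).mul (hs.pow 2)).add (((hid.pow 2).const_mul 8).mul hs)
  refine H.congr_deriv ?_
  push_cast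
  simp only [Pi.pow_apply]
  ring

lemma hasDerivAt_g (σ₀ σ₁ σ₂ σ₃ σ₄ t : ℝ) (hRt : cheunR σ₀ σ₁ σ₂ σ₃ σ₄ t ≠ 0) :
    HasDerivAt (fun s => 4 * s ^ 2 * (s - 1) ^ 2 / cheunR σ₀ σ₁ σ₂ σ₃ σ₄ s)
      (cGd σ₀ σ₁ σ₂ σ₃ σ₄ t) t :=
  (hasDerivAt_num t).div (hasDerivAt_cheunR σ₀ σ₁ σ₂ σ₃ σ₄ t) hRt

lemma hasDerivAt_cGd (σ₀ σ₁ σ₂ σ₃ σ₄ t : ℝ) (hRt : cheunR σ₀ σ₁ σ₂ σ₃ σ₄ t ≠ 0) :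
    HasDerivAt (cGd σ₀ σ₁ σ₂ σ₃ σ₄) (cGdd σ₀ σ₁ σ₂ σ₃ σ₄ t) t := by
  have hnum : HasDerivAt
      (fun s => (8 * s * (s - 1) ^ 2 + 8 * s ^ 2 * (s - 1)) * cheunR σ₀ σ₁ σ₂ σ₃ σ₄ s
        - 4 * s ^ 2 * (s - 1) ^ 2 * cRd σ₀ σ₁ σ₂ σ₃ σ₄ s)
      ((8 * (t - 1) ^ 2 + 32 * t * (t - 1) + 8 * t ^ 2) * cheunR σ₀ σ₁ σ₂ σ₃ σ₄ t
        + (8 * t * (t - 1) ^ 2 + 8 * t ^ 2 * (t - 1)) * cRd σ₀ σ₁ σ₂ σ₃ σ₄ t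
        - ((8 * t * (t - 1) ^ 2 + 8 * t ^ 2 * (t - 1)) * cRd σ₀ σ₁ σ₂ σ₃ σ₄ t
          + 4 * t ^ 2 * (t - 1) ^ 2 * cRdd σ₀ σ₁ σ₂ σ₃ σ₄ t)) t :=
    ((hasDerivAt_numd t).mul (hasDerivAt_cheunR σ₀ σ₁ σ₂ σ₃ σ₄ t)).sub
      ((hasDerivAt_num t).mul (hasDerivAt_cRd σ₀ σ₁ σ₂ σ₃ σ₄ t))
  have hden : HasDerivAt (fun s => cheunR σ₀ σ₁ σ₂ σ₃ σ₄ s ^ 2)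
      ((2 : ℕ) * cheunR σ₀ σ₁ σ₂ σ₃ σ₄ t ^ 1 * cRd σ₀ σ₁ σ₂ σ₃ σ₄ t) t :=
    (hasDerivAt_cheunR σ₀ σ₁ σ₂ σ₃ σ₄ t).pow 2
  have H := hnum.div hden (pow_ne_zero 2 hRt)
  have hval : (((8 * (t - 1) ^ 2 + 32 * t * (t - 1) + 8 * t ^ 2) * cheunR σ₀ σ₁ σ₂ σ₃ σ₄ t
        + (8 * t * (t - 1) ^ 2 + 8 * t ^ 2 * (t - 1)) * cRd σ₀ σ₁ σ₂ σ₃ σ₄ t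
        - ((8 * t * (t - 1) ^ 2 + 8 * t ^ 2 * (t - 1)) * cRd σ₀ σ₁ σ₂ σ₃ σ₄ t
          + 4 * t ^ 2 * (t - 1) ^ 2 * cRdd σ₀ σ₁ σ₂ σ₃ σ₄ t))
        * cheunR σ₀ σ₁ σ₂ σ₃ σ₄ t ^ 2
      - ((8 * t * (t - 1) ^ 2 + 8 * t ^ 2 * (t - 1)) * cheunR σ₀ σ₁ σ₂ σ₃ σ₄ t
          - 4 * t ^ 2 * (t - 1) ^ 2 * cRd σ₀ σ₁ σ₂ σ₃ σ₄ t)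
        * ((2 : ℕ) * cheunR σ₀ σ₁ σ₂ σ₃ σ₄ t ^ 1 * cRd σ₀ σ₁ σ₂ σ₃ σ₄ t))
      / (cheunR σ₀ σ₁ σ₂ σ₃ σ₄ t ^ 2) ^ 2 = cGdd σ₀ σ₁ σ₂ σ₃ σ₄ t := by
    unfold cGdd
    rw [div_eq_div_iff (pow_ne_zero 2 (pow_ne_zero 2 hRt)) (pow_ne_zero 3 hRt)]
    ring
  have H' : HasDerivAt
      (fun s => ((8 * s * (s - 1) ^ 2 + 8 * s ^ 2 * (s - 1)) * cheunR σ₀ σ₁ σ₂ σ₃ σ₄ s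
        - 4 * s ^ 2 * (s - 1) ^ 2 * cRd σ₀ σ₁ σ₂ σ₃ σ₄ s) / cheunR σ₀ σ₁ σ₂ σ₃ σ₄ s ^ 2)
      (cGdd σ₀ σ₁ σ₂ σ₃ σ₄ t) t := hval ▸ H
  exact H'

set_option maxHeartbeats 4000000 in
/-- closed form of the potential of the confluent Heun class. -/
theorem stmt_15 (σ₀ σ₁ σ₂ σ₃ σ₄ τ₀ τ₁ τ₂ τ₃ τ₄ : ℝ)
    (y : ℝ → ℝ) (I : Set ℝ) (hI : IsOpen I)
    (hy : ∀ x ∈ I, DifferentiableAt ℝ y x)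
    (hy' : ∀ x ∈ I, DifferentiableAt ℝ (deriv y) x)
    (hy'' : ∀ x ∈ I, DifferentiableAt ℝ (deriv (deriv y)) x)
    (hy0 : ∀ x ∈ I, deriv y x ≠ 0)
    (hy01 : ∀ x ∈ I, y x ≠ 0 ∧ y x ≠ 1)
    (hR : ∀ x ∈ I, cheunR σ₀ σ₁ σ₂ σ₃ σ₄ (y x) ≠ 0)
    (heq : ∀ x ∈ I, (deriv y x) ^ 2
      = 4 * (y x) ^ 2 * (y x - 1) ^ 2 / cheunR σ₀ σ₁ σ₂ σ₃ σ₄ (y x)) :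
    ∀ x ∈ I,
      -(cheunS τ₀ τ₁ τ₂ τ₃ τ₄ (y x)) / cheunR σ₀ σ₁ σ₂ σ₃ σ₄ (y x)
          - (1 / 2) * (deriv (fun t => deriv (deriv y) t / deriv y t) x
              - (1 / 2) * (deriv (deriv y) x / deriv y x) ^ 2)
        = ((y x) ^ 2 * (y x - 1) ^ 2 / (cheunR σ₀ σ₁ σ₂ σ₃ σ₄ (y x)) ^ 2) *
            (deriv (deriv (cheunR σ₀ σ₁ σ₂ σ₃ σ₄)) (y x)
              + ((2 * y x - 1) * deriv (cheunR σ₀ σ₁ σ₂ σ₃ σ₄) (y x)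
                  - 4 * cheunR σ₀ σ₁ σ₂ σ₃ σ₄ (y x)) / (y x * (y x - 1))
              + (2 * y x - 1) ^ 2 * cheunR σ₀ σ₁ σ₂ σ₃ σ₄ (y x)
                / ((y x) ^ 2 * (y x - 1) ^ 2)
              - (5 / 4) * (deriv (cheunR σ₀ σ₁ σ₂ σ₃ σ₄) (y x)) ^ 2
                / cheunR σ₀ σ₁ σ₂ σ₃ σ₄ (y x))
          - cheunS τ₀ τ₁ τ₂ τ₃ τ₄ (y x) / cheunR σ₀ σ₁ σ₂ σ₃ σ₄ (y x) := by
  -- second derivative of y in terms of y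
  have hyc2 : ∀ z ∈ I, deriv (deriv y) z = cGd σ₀ σ₁ σ₂ σ₃ σ₄ (y z) / 2 := by
    intro z hz
    have hdy := (hy z hz).hasDerivAt
    have hcomp : HasDerivAt (fun w => 4 * (y w) ^ 2 * (y w - 1) ^ 2 / cheunR σ₀ σ₁ σ₂ σ₃ σ₄ (y w))
        (cGd σ₀ σ₁ σ₂ σ₃ σ₄ (y z) * deriv y z) z :=
      (hasDerivAt_g σ₀ σ₁ σ₂ σ₃ σ₄ (y z) (hR z hz)).comp z hdy
    have hsq : HasDerivAt (fun w => (deriv y w) ^ 2)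
        ((2 : ℕ) * deriv y z ^ 1 * deriv (deriv y) z) z := (hy' z hz).hasDerivAt.pow 2
    have hEq : (fun w => (deriv y w) ^ 2)
        =ᶠ[nhds z] (fun w => 4 * (y w) ^ 2 * (y w - 1) ^ 2 / cheunR σ₀ σ₁ σ₂ σ₃ σ₄ (y w)) :=
      Filter.eventuallyEq_of_mem (hI.mem_nhds hz) (fun w hw => heq w hw)
    have huniq : cGd σ₀ σ₁ σ₂ σ₃ σ₄ (y z) * deriv y z
        = (2 : ℕ) * deriv y z ^ 1 * deriv (deriv y) z :=
      (hcomp.congr_of_eventuallyEq hEq).unique hsq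
    have h2 : deriv y z * cGd σ₀ σ₁ σ₂ σ₃ σ₄ (y z)
        = deriv y z * (2 * deriv (deriv y) z) := by
      push_cast at huniq
      linear_combination huniq
    have h3 := mul_left_cancel₀ (hy0 z hz) h2
    linarith
  intro x hx
  obtain ⟨ht0, ht1⟩ := hy01 x hx
  have ht1' : y x - 1 ≠ 0 := sub_ne_zero.mpr ht1
  have hRt := hR x hx
  have hp := hy0 x hx
  -- third derivative of y
  have h3 : deriv (deriv (deriv y)) x = cGdd σ₀ σ₁ σ₂ σ₃ σ₄ (y x) * deriv y x / 2 := by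
    have hEq2 : deriv (deriv y) =ᶠ[nhds x] (fun z => cGd σ₀ σ₁ σ₂ σ₃ σ₄ (y z) / 2) :=
      Filter.eventuallyEq_of_mem (hI.mem_nhds hx) (fun w hw => hyc2 w hw)
    have H : HasDerivAt (fun z => cGd σ₀ σ₁ σ₂ σ₃ σ₄ (y z) / 2)
        (cGdd σ₀ σ₁ σ₂ σ₃ σ₄ (y x) * deriv y x / 2) x :=
      ((hasDerivAt_cGd σ₀ σ₁ σ₂ σ₃ σ₄ (y x) hRt).comp x (hy x hx).hasDerivAt).div_const 2
    exact (H.congr_of_eventuallyEq hEq2).deriv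
  -- derivative of y''/y'
  have hdiv : HasDerivAt (fun z => deriv (deriv y) z / deriv y z)
      ((deriv (deriv (deriv y)) x * deriv y x - deriv (deriv y) x * deriv (deriv y) x)
        / deriv y x ^ 2) x :=
    (hy'' x hx).hasDerivAt.div (hy' x hx).hasDerivAt hp
  have hfrac : 1 / deriv y x ^ 2
      = cheunR σ₀ σ₁ σ₂ σ₃ σ₄ (y x) / (4 * y x ^ 2 * (y x - 1) ^ 2) := by
    rw [heq x hx, one_div_div]
  have hS : deriv (fun t => deriv (deriv y) t / deriv y t) x
      - 1 / 2 * (deriv (deriv y) x / deriv y x) ^ 2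
      = cGdd σ₀ σ₁ σ₂ σ₃ σ₄ (y x) / 2
        - 3 / 8 * cGd σ₀ σ₁ σ₂ σ₃ σ₄ (y x) ^ 2
          * (cheunR σ₀ σ₁ σ₂ σ₃ σ₄ (y x) / (4 * y x ^ 2 * (y x - 1) ^ 2)) := by
    rw [hdiv.deriv, h3, hyc2 x hx, ← hfrac]
    field_simp
    ring
  rw [hS, deriv2_cheunR, deriv_cheunR]
  simp only [cGd, cGdd]
  generalize cheunS τ₀ τ₁ τ₂ τ₃ τ₄ (y x) = sv
  generalize hr : cheunR σ₀ σ₁ σ₂ σ₃ σ₄ (y x) = rv at *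
  generalize cRd σ₀ σ₁ σ₂ σ₃ σ₄ (y x) = r1
  generalize cRdd σ₀ σ₁ σ₂ σ₃ σ₄ (y x) = r2
  field_simp
  ring
end
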